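/- arXiv:1908.00032 — 9 statements merged into one kernel-verified Lean document; each statement's English description precedes it below -/
import Mathlib

section
/- det M = 0. -/
/-- `g c x y = c / (x - y)`. -/
noncomputable def g (c x y : ℂ) : ℂ := c / (x - y)

/-- `esym w p` is the `p`-th elementary symmetric polynomial of the entries of `w`;
it equals `1` for `p = 0` and `0` for `p` larger than the number of entries. -/
noncomputable def esym {m : ℕ} (w : Fin m → ℂ) (p : ℕ) : ℂ :=
  ∑ s ∈ Finset.powersetCard p Finset.univ, ∏ i ∈ s, w i

/-- `Y a w = ∑_{p=0}^{n} a p * σ_p(w)`. -/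
noncomputable def Y {n : ℕ} (a : Fin (n + 1) → ℂ) (w : Fin n → ℂ) : ℂ :=
  ∑ p : Fin (n + 1), a p * esym w (p : ℕ)

/-- The matrix `M_{jk} = (∏_{i≠k} g(u_k,u_i)) Y_k(û_j) - δ_{jk} (∏_i g(u_j,v_i)) Y_j(v)`. -/
noncomputable def Mmat (c : ℂ) {n : ℕ} (u : Fin (n + 1) → ℂ) (v : Fin n → ℂ)
    (a : Fin (n + 1) → Fin (n + 1) → ℂ) : Matrix (Fin (n + 1)) (Fin (n + 1)) ℂ :=
  Matrix.of fun j k =>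
    (∏ i ∈ Finset.univ.erase k, g c (u k) (u i)) * Y (fun p => a p k) (u ∘ j.succAbove)
      - (if j = k then 1 else 0) * ((∏ i, g c (u j) (v i)) * Y (fun p => a p j) v)

open Finset Polynomial

lemma map_succAboveEmb_eq_erase {n : ℕ} (j : Fin (n+1)) :
    (Finset.univ.map (j.succAboveEmb) : Finset (Fin (n+1))) = Finset.univ.erase j := by
  rw [Fin.univ_succAbove n j, Finset.erase_cons]

lemma esym_succAbove {n : ℕ} (u : Fin (n+1) → ℂ) (j : Fin (n+1)) (p : ℕ) :
    esym (u ∘ j.succAbove) p = ∑ t ∈ (Finset.univ.erase j).powersetCard p, ∏ i ∈ t, u i := by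
  rw [esym, ← map_succAboveEmb_eq_erase j, Finset.powersetCard_map, Finset.sum_map]
  refine Finset.sum_congr rfl fun s _ => ?_
  have hs : ((Finset.mapEmbedding j.succAboveEmb).toEmbedding s : Finset (Fin (n+1)))
      = s.map j.succAboveEmb := rfl
  rw [hs, Finset.prod_map]
  simp [Fin.succAboveEmb]

lemma coeff_prod_X_sub_C {σ : Type*} (s : Finset σ) (w : σ → ℂ) {p : ℕ} (hp : p ≤ s.card) :
    (∏ i ∈ s, (X - C (w i))).coeff (s.card - p)
      = (-1)^p * ∑ t ∈ s.powersetCard p, ∏ i ∈ t, w i := by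
  have h1 : ∀ i, X - C (w i) = X + C (-w i) := by intro i; rw [map_neg, sub_eq_add_neg]
  simp_rw [h1]
  rw [Finset.prod_X_add_C_coeff s (fun i => -w i) (Nat.sub_le _ _),
    Nat.sub_sub_self hp, Finset.mul_sum]
  refine Finset.sum_congr rfl fun t ht => ?_
  have hc : t.card = p := (Finset.mem_powersetCard.mp ht).2
  rw [← hc, ← Finset.prod_const, ← Finset.prod_mul_distrib]
  exact Finset.prod_congr rfl fun i _ => by ring

lemma key {n : ℕ} (u : Fin (n+1) → ℂ) (hu : Function.Injective u) (v : Fin n → ℂ)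
    {p : ℕ} (hp : p ≤ n) :
    ∑ j, (∏ i, (u j - v i)) / (∏ i ∈ Finset.univ.erase j, (u j - u i))
        * esym (u ∘ j.succAbove) p = esym v p := by
  set P : Polynomial ℂ := ∏ i, (X - C (v i)) with hP
  have hcard : (Finset.univ : Finset (Fin (n+1))).card = n + 1 := by simp
  have hdeg : P.degree < ((Finset.univ : Finset (Fin (n+1))).card : ℕ) := by
    rw [hcard, hP]
    calc P.degree ≤ n := by
          rw [hP]
          refine le_trans (Polynomial.degree_prod_le _ _) ?_
          simp [Polynomial.degree_X_sub_C]
      _ < (n+1 : ℕ) := by exact_mod_cast Nat.lt_succ_self n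
  have heq := Lagrange.eq_interpolate (s := Finset.univ) (v := u)
    (Set.injOn_of_injective hu) hdeg
  have hco := congrArg (fun q => Polynomial.coeff q (n - p)) heq
  simp only [Lagrange.interpolate_apply] at hco
  -- LHS coeff
  have hL : P.coeff (n - p) = (-1)^p * esym v p := by
    have := coeff_prod_X_sub_C (Finset.univ : Finset (Fin n)) v (p := p) (by simpa using hp)
    simpa [esym] using this
  -- basis coeff
  have hB : ∀ j : Fin (n+1),
      (Lagrange.basis Finset.univ u j).coeff (n - p)
        = (∏ i ∈ Finset.univ.erase j, (u j - u i))⁻¹ * ((-1)^p * esym (u ∘ j.succAbove) p) := by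
    intro j
    have hbasis : Lagrange.basis Finset.univ u j
        = C (∏ i ∈ Finset.univ.erase j, (u j - u i))⁻¹
          * ∏ i ∈ Finset.univ.erase j, (X - C (u i)) := by
      rw [Lagrange.basis]
      simp_rw [Lagrange.basisDivisor]
      rw [Finset.prod_mul_distrib, ← map_prod, ← Finset.prod_inv_distrib]
    have hec : (Finset.univ.erase j).card = n := by
      rw [Finset.card_erase_of_mem (Finset.mem_univ j), hcard]
      omega
    have hcc : (∏ i ∈ Finset.univ.erase j, (X - C (u i))).coeff (n - p)
        = (-1)^p * esym (u ∘ j.succAbove) p := by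
      have h := coeff_prod_X_sub_C (Finset.univ.erase j) u (p := p) (by omega)
      rw [hec] at h
      rw [h, esym_succAbove]
    rw [hbasis, Polynomial.coeff_C_mul, hcc]
  simp_rw [hL, Polynomial.finset_sum_coeff, Polynomial.coeff_C_mul, hB] at hco
  have hne : ((-1 : ℂ))^p ≠ 0 := pow_ne_zero _ (by norm_num)
  refine mul_left_cancel₀ hne ?_
  rw [hco, Finset.mul_sum]
  refine Finset.sum_congr rfl fun j _ => ?_
  have hev : P.eval (u j) = ∏ i, (u j - v i) := by
    rw [hP]; simp [Polynomial.eval_prod]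
  rw [hev]
  field_simp

/-- `det M = 0`. -/
theorem det_M_eq_zero (c : ℂ) (hc : c ≠ 0) (n : ℕ) (hn : 1 ≤ n)
    (u : Fin (n + 1) → ℂ) (hu : Function.Injective u)
    (v : Fin n → ℂ) (huv : ∀ (j : Fin (n + 1)) (i : Fin n), u j ≠ v i)
    (a : Fin (n + 1) → Fin (n + 1) → ℂ) :
    (Mmat c u v a).det = 0 := by
  classical
  set y : Fin (n+1) → ℂ :=
    fun j => (∏ i, (u j - v i)) / (∏ i ∈ Finset.univ.erase j, (u j - u i)) with hy
  have hP1 : ∀ j : Fin (n+1), (∏ i ∈ Finset.univ.erase j, (u j - u i)) ≠ 0 := by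
    intro j
    refine Finset.prod_ne_zero_iff.mpr fun i hi => sub_ne_zero.mpr fun h => ?_
    exact (Finset.mem_erase.mp hi).1 (hu h).symm
  have hP2 : ∀ j, (∏ i, (u j - v i)) ≠ 0 := fun j =>
    Finset.prod_ne_zero_iff.mpr fun i _ => sub_ne_zero.mpr (huv j i)
  have hy0 : y ≠ 0 := by
    intro h
    have h0 := congrFun h 0
    simp only [hy, Pi.zero_apply] at h0
    exact (div_ne_zero (hP2 0) (hP1 0)) h0
  rw [← Matrix.exists_vecMul_eq_zero_iff]
  refine ⟨y, hy0, ?_⟩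
  funext k
  simp only [Matrix.vecMul, dotProduct, Pi.zero_apply, Mmat, Matrix.of_apply]
  have hA : (∏ i ∈ Finset.univ.erase k, g c (u k) (u i))
      = y k * ∏ i, g c (u k) (v i) := by
    simp only [g, hy]
    rw [Finset.prod_div_distrib, Finset.prod_div_distrib, Finset.prod_const,
      Finset.prod_const, Finset.card_erase_of_mem (Finset.mem_univ k)]
    simp only [Finset.card_univ, Fintype.card_fin, Nat.add_sub_cancel]
    rw [div_eq_mul_inv, div_eq_mul_inv, div_eq_mul_inv]
    rw [show (∏ i : Fin n, (u k - v i)) * (∏ i ∈ Finset.univ.erase k, (u k - u i))⁻¹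
        * (c ^ n * (∏ i : Fin n, (u k - v i))⁻¹)
      = (c ^ n * (∏ i ∈ Finset.univ.erase k, (u k - u i))⁻¹)
        * ((∏ i : Fin n, (u k - v i)) * (∏ i : Fin n, (u k - v i))⁻¹) from by ring,
      mul_inv_cancel₀ (hP2 k), mul_one]
  have hsum : ∑ j, y j * Y (fun p => a p k) (u ∘ j.succAbove) = Y (fun p => a p k) v := by
    simp_rw [Y, Finset.mul_sum]
    rw [Finset.sum_comm]
    refine Finset.sum_congr rfl fun p _ => ?_
    have hk := key u hu v (p := (p : ℕ)) (Nat.lt_succ_iff.mp p.isLt)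
    calc ∑ j, y j * (a p k * esym (u ∘ j.succAbove) (p : ℕ))
        = a p k * ∑ j, y j * esym (u ∘ j.succAbove) (p : ℕ) := by
          rw [Finset.mul_sum]; exact Finset.sum_congr rfl fun j _ => by ring
      _ = a p k * esym v (p : ℕ) := by rw [hy] at *; rw [hk]
  calc ∑ j, y j * ((∏ i ∈ Finset.univ.erase k, g c (u k) (u i)) * Y (fun p => a p k) (u ∘ j.succAbove)
        - (if j = k then 1 else 0) * ((∏ i, g c (u j) (v i)) * Y (fun p => a p j) v))
      = (∑ j, (∏ i ∈ Finset.univ.erase k, g c (u k) (u i)) * (y j * Y (fun p => a p k) (u ∘ j.succAbove)))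
        - ∑ j, (if j = k then y j * ((∏ i, g c (u j) (v i)) * Y (fun p => a p j) v) else 0) := by
        rw [← Finset.sum_sub_distrib]
        refine Finset.sum_congr rfl fun j _ => ?_
        split_ifs with h <;> ring
    _ = 0 := by
        rw [← Finset.mul_sum, hsum, Finset.sum_ite_eq' Finset.univ k, if_pos (Finset.mem_univ k), hA]
        ring
end

section
/- Assume in addition that v_1,…,v_n are pairwise distinct. Then the vector X ∈ ℂ^{n+1} defined by X_ℓ := Δ(û_ℓ) · Ω̂_ℓ satisfies Σ_{k=1}^{n+1} M_{jk} X_k = 0 for every j = 1, …, n+1. -/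
/-- The `n × (n+1)` matrix `Ω_{jk} = g(u_k, v_j) * Y_k(v^{(j → u_k)})`. -/
noncomputable def Om (c : ℂ) {n : ℕ} (u : Fin (n + 1) → ℂ) (v : Fin n → ℂ)
    (a : Fin (n + 1) → Fin (n + 1) → ℂ) : Matrix (Fin n) (Fin (n + 1)) ℂ :=
  Matrix.of fun j k =>
    g c (u k) (v j) * Y (fun p => a p k) (Function.update v j (u k))

/-- `Ω̂_ℓ` : the determinant of the `n × n` matrix obtained from `Ω` by deleting column `ℓ`. -/
noncomputable def OmHat (c : ℂ) {n : ℕ} (u : Fin (n + 1) → ℂ) (v : Fin n → ℂ)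
    (a : Fin (n + 1) → Fin (n + 1) → ℂ) (ℓ : Fin (n + 1)) : ℂ :=
  ((Om c u v a).submatrix id ℓ.succAbove).det

/-- `Δ(û_ℓ) = ∏_{j > k, j ≠ ℓ, k ≠ ℓ} g(u_j, u_k)`. -/
noncomputable def DelHat (c : ℂ) {n : ℕ} (u : Fin (n + 1) → ℂ) (ℓ : Fin (n + 1)) : ℂ :=
  ∏ p ∈ Finset.univ.filter
      (fun p : Fin (n + 1) × Fin (n + 1) => p.2 < p.1 ∧ p.1 ≠ ℓ ∧ p.2 ≠ ℓ),
    g c (u p.1) (u p.2)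


open Finset Polynomial
namespace MSS
variable {n : ℕ}

noncomputable def Ac (v : Fin n → ℂ) (i : Fin n) (p : ℕ) : ℂ :=
  ∑ s ∈ Finset.powersetCard p (Finset.univ.erase i), ∏ l ∈ s, v l

noncomputable def Bc (v : Fin n → ℂ) (i : Fin n) : ℕ → ℂ
  | 0 => 0
  | (q+1) => Ac v i q

noncomputable def Vp (v : Fin n → ℂ) : ℂ[X] := ∏ i, (X - C (v i))
noncomputable def Up (u : Fin (n+1) → ℂ) (j : Fin (n+1)) : ℂ[X] :=
  ∏ k ∈ univ.erase j, (X - C (u k))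
noncomputable def Pp (v : Fin n → ℂ) (i : Fin n) : ℂ[X] :=
  ∏ l ∈ univ.erase i, (X - C (v l))
noncomputable def mu (u : Fin (n+1) → ℂ) (v : Fin n → ℂ) (j : Fin (n+1)) (i : Fin n) : ℂ :=
  (Up u j).eval (v i) / ∏ l ∈ univ.erase i, (v i - v l)

lemma prod_coeff {ι : Type*} (s : Finset ι) (f : ι → ℂ) {p : ℕ} (hp : p ≤ s.card) :
    (∏ i ∈ s, (X - C (f i))).coeff (s.card - p)
      = (-1)^p * ∑ t ∈ powersetCard p s, ∏ i ∈ t, f i := by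
  have h1 : (∏ i ∈ s, (X - C (f i))) = (Multiset.map (fun t => X - C t) (s.val.map f)).prod := by
    rw [Multiset.map_map]; rfl
  have hc : Multiset.card (s.val.map f) = s.card := by simp
  have hple : s.card - p ≤ Multiset.card (s.val.map f) := by omega
  rw [h1, Multiset.prod_X_sub_C_coeff _ hple, hc, Nat.sub_sub_self hp, Finset.esymm_map_val]

lemma card_erase_univ (j : Fin (n+1)) : (univ.erase j).card = n := by
  rw [Finset.card_erase_of_mem (mem_univ j), Finset.card_univ, Fintype.card_fin]
  rfl

lemma card_erase_univ' (i : Fin n) : ((univ : Finset (Fin n)).erase i).card = n - 1 := by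
  rw [Finset.card_erase_of_mem (mem_univ i), Finset.card_univ, Fintype.card_fin]

/- ### V -/
lemma Vp_natDegree (v : Fin n → ℂ) : (Vp v).natDegree = n := by
  unfold Vp
  rw [Polynomial.natDegree_prod _ _ (fun i _ => X_sub_C_ne_zero (v i))]
  simp [Polynomial.natDegree_X_sub_C]

lemma Vp_coeff_top (v : Fin n → ℂ) : (Vp v).coeff n = 1 := by
  have := (monic_prod_of_monic _ _ fun i (_ : i ∈ univ) => monic_X_sub_C (v i)).coeff_natDegree
  rwa [← Vp, Vp_natDegree] at this

lemma Vp_coeff (v : Fin n → ℂ) {p : ℕ} (hp : p ≤ n) :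
    (Vp v).coeff (n - p) = (-1)^p * esym v p := by
  have hcard : (univ : Finset (Fin n)).card = n := by simp
  have := prod_coeff (univ : Finset (Fin n)) v (p := p) (by omega)
  rw [hcard] at this
  exact this

lemma Vp_eval (v : Fin n → ℂ) (x : ℂ) : (Vp v).eval x = ∏ i, (x - v i) := by
  simp [Vp, eval_prod]

/- ### U -/
lemma erase_esym (u : Fin (n+1) → ℂ) (j : Fin (n+1)) (p : ℕ) :
    ∑ t ∈ powersetCard p (univ.erase j), ∏ i ∈ t, u i = esym (u ∘ j.succAbove) p := by
  have hval : (univ.erase j) = Finset.map j.succAboveEmb univ := by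
    rw [Fin.univ_succAbove n j, Finset.erase_cons]
  have h2 : esym (u ∘ j.succAbove) p
      = (Multiset.map (u ∘ j.succAbove) (univ : Finset (Fin n)).val).esymm p := by
    rw [Finset.esymm_map_val]; rfl
  rw [← Finset.esymm_map_val, h2, hval, Finset.map_val, Multiset.map_map]
  rfl

lemma Up_natDegree (u : Fin (n+1) → ℂ) (j : Fin (n+1)) : (Up u j).natDegree = n := by
  unfold Up
  rw [Polynomial.natDegree_prod _ _ (fun i _ => X_sub_C_ne_zero (u i))]
  simp only [Polynomial.natDegree_X_sub_C, Finset.sum_const, smul_eq_mul, mul_one]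
  exact card_erase_univ j

lemma Up_coeff_top (u : Fin (n+1) → ℂ) (j : Fin (n+1)) : (Up u j).coeff n = 1 := by
  have := (monic_prod_of_monic (univ.erase j) _
    (fun i (_ : i ∈ univ.erase j) => monic_X_sub_C (u i))).coeff_natDegree
  rwa [← Up, Up_natDegree] at this

lemma Up_coeff (u : Fin (n+1) → ℂ) (j : Fin (n+1)) {p : ℕ} (hp : p ≤ n) :
    (Up u j).coeff (n - p) = (-1)^p * esym (u ∘ j.succAbove) p := by
  have := prod_coeff (univ.erase j) u (p := p) (by rw [card_erase_univ]; omega)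
  rw [card_erase_univ, erase_esym] at this
  exact this

lemma Up_eval (u : Fin (n+1) → ℂ) (j : Fin (n+1)) (x : ℂ) :
    (Up u j).eval x = ∏ k ∈ univ.erase j, (x - u k) := by
  simp [Up, eval_prod]

/- ### P -/
lemma Pp_natDegree (v : Fin n → ℂ) (i : Fin n) : (Pp v i).natDegree = n - 1 := by
  unfold Pp
  rw [Polynomial.natDegree_prod _ _ (fun l _ => X_sub_C_ne_zero (v l))]
  simp only [Polynomial.natDegree_X_sub_C, Finset.sum_const, smul_eq_mul, mul_one]
  exact card_erase_univ' i

lemma Pp_coeff_n (hn : 1 ≤ n) (v : Fin n → ℂ) (i : Fin n) : (Pp v i).coeff n = 0 := by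
  apply Polynomial.coeff_eq_zero_of_natDegree_lt
  rw [Pp_natDegree]; omega

lemma Pp_coeff_top (hn : 1 ≤ n) (v : Fin n → ℂ) (i : Fin n) : (Pp v i).coeff (n-1) = 1 := by
  have := (monic_prod_of_monic (univ.erase i) _
    (fun l (_ : l ∈ univ.erase i) => monic_X_sub_C (v l))).coeff_natDegree
  rwa [← Pp, Pp_natDegree] at this

lemma Pp_coeff (v : Fin n → ℂ) (i : Fin n) {p : ℕ} (hp1 : 1 ≤ p) (hp : p ≤ n) :
    (Pp v i).coeff (n - p) = (-1)^(p-1) * Bc v i p := by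
  have := prod_coeff (univ.erase i) v (p := p-1) (by rw [card_erase_univ']; omega)
  rw [card_erase_univ'] at this
  have harith : n - 1 - (p - 1) = n - p := by omega
  rw [harith] at this
  unfold Pp
  rw [this]
  congr 1
  cases p with
  | zero => omega
  | succ q => rfl

lemma Pp_eval (v : Fin n → ℂ) (i : Fin n) (x : ℂ) :
    (Pp v i).eval x = ∏ l ∈ univ.erase i, (x - v l) := by
  simp [Pp, eval_prod]

/- ### helper -/
lemma poly_zero (v : Fin n → ℂ) (hv : Function.Injective v) (q : ℂ[X])
    (hdeg : q.natDegree ≤ n) (htop : q.coeff n = 0)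
    (hroots : ∀ m : Fin n, q.eval (v m) = 0) : q = 0 := by
  by_cases h0 : q = 0
  · exact h0
  refine Polynomial.eq_zero_of_natDegree_lt_card_of_eval_eq_zero q hv hroots ?_
  rw [Fintype.card_fin]
  rcases lt_or_eq_of_le hdeg with h | h
  · exact h
  · exfalso
    apply h0
    apply Polynomial.leadingCoeff_eq_zero.mp
    rw [Polynomial.leadingCoeff, h, htop]

/- ### Lemma I : the Lagrange interpolation identity -/
noncomputable def Dp (u : Fin (n+1) → ℂ) (v : Fin n → ℂ) (j : Fin (n+1)) : ℂ[X] :=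
  Vp v - Up u j + ∑ i, C (mu u v j i) * Pp v i

lemma prod_sub_ne_zero (v : Fin n → ℂ) (hv : Function.Injective v) (i : Fin n) :
    ∏ l ∈ univ.erase i, (v i - v l) ≠ 0 := by
  apply Finset.prod_ne_zero_iff.mpr
  intro l hl
  have : l ≠ i := Finset.ne_of_mem_erase hl
  exact sub_ne_zero_of_ne fun h => this (hv h.symm)

lemma Dp_eq_zero (hn : 1 ≤ n) (u : Fin (n+1) → ℂ) (v : Fin n → ℂ)
    (hv : Function.Injective v) (j : Fin (n+1)) : Dp u v j = 0 := by
  apply poly_zero v hv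
  · apply le_trans (Polynomial.natDegree_add_le _ _)
    apply max_le
    · apply le_trans (Polynomial.natDegree_sub_le _ _)
      apply max_le (le_of_eq (Vp_natDegree v)) (le_of_eq (Up_natDegree u j))
    · apply Polynomial.natDegree_sum_le_of_forall_le
      intro i _
      apply le_trans (Polynomial.natDegree_mul_le)
      rw [Polynomial.natDegree_C, Pp_natDegree]
      omega
  · rw [Dp, Polynomial.coeff_add, Polynomial.coeff_sub, Vp_coeff_top, Up_coeff_top,
      Polynomial.finset_sum_coeff]
    rw [Finset.sum_congr rfl fun i (_ : i ∈ univ) => by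
      rw [Polynomial.coeff_C_mul, Pp_coeff_n hn v i, mul_zero]]
    simp
  · intro m
    have hVm : (Vp v).eval (v m) = 0 := by
      rw [Vp_eval]
      exact Finset.prod_eq_zero (mem_univ m) (sub_self (v m))
    have hsum : (∑ i, C (mu u v j i) * Pp v i).eval (v m) = (Up u j).eval (v m) := by
      rw [Polynomial.eval_finset_sum]
      rw [Finset.sum_eq_single m]
      · rw [Polynomial.eval_mul, Polynomial.eval_C, Pp_eval, mu,
          div_mul_cancel₀ _ (prod_sub_ne_zero v hv m)]
      · intro i _ him
        rw [Polynomial.eval_mul, Pp_eval]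
        have : ∏ l ∈ univ.erase i, (v m - v l) = 0 :=
          Finset.prod_eq_zero (Finset.mem_erase.mpr ⟨Ne.symm him, mem_univ m⟩) (sub_self (v m))
        rw [this, mul_zero]
      · intro h; exact absurd (mem_univ m) h
    rw [Dp, Polynomial.eval_add, Polynomial.eval_sub, hVm, hsum]
    ring

/- ### Lemma L -/
lemma lemma_L (hn : 1 ≤ n) (u : Fin (n+1) → ℂ) (v : Fin n → ℂ)
    (hv : Function.Injective v) (j : Fin (n+1)) {p : ℕ} (hp : p ≤ n) :
    ∑ i, mu u v j i * Bc v i p = esym v p - esym (u ∘ j.succAbove) p := by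
  cases p with
  | zero => simp [Bc, esym]
  | succ q =>
    have h0 := Dp_eq_zero hn u v hv j
    have hc : (Dp u v j).coeff (n - (q+1)) = 0 := by rw [h0]; simp
    rw [Dp, Polynomial.coeff_add, Polynomial.coeff_sub, Vp_coeff v hp, Up_coeff u j hp,
      Polynomial.finset_sum_coeff] at hc
    rw [Finset.sum_congr rfl fun i (_ : i ∈ univ) => by
      rw [Polynomial.coeff_C_mul, Pp_coeff v i (Nat.succ_le_succ (Nat.zero_le q)) hp]] at hc
    have hq : ((-1 : ℂ))^(q+1) = -((-1:ℂ))^q := by ring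
    rw [hq] at hc
    simp only [Nat.succ_sub_one, Nat.add_sub_cancel] at hc
    have hs : ∑ i, mu u v j i * ((-1:ℂ)^q * Bc v i (q+1))
        = (-1:ℂ)^q * ∑ i, mu u v j i * Bc v i (q+1) := by
      rw [Finset.mul_sum]
      exact Finset.sum_congr rfl fun i _ => by ring
    rw [hs] at hc
    have h2 : (-1:ℂ)^q * (-(esym v (q+1)) + esym (u ∘ j.succAbove) (q+1)
        + ∑ i, mu u v j i * Bc v i (q+1)) = 0 := by linear_combination hc
    have hne : ((-1:ℂ))^q ≠ 0 := pow_ne_zero _ (by norm_num)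
    have h3 := (mul_eq_zero.mp h2).resolve_left hne
    linear_combination h3

/- ### Lemma II : the main polynomial identity -/
noncomputable def Ep (u : Fin (n+1) → ℂ) (v : Fin n → ℂ) (j : Fin (n+1)) (p : ℕ) : ℂ[X] :=
  C (esym (u ∘ j.succAbove) p) * Vp v - C (esym v p) * Up u j
    + ∑ i, C (mu u v j i) * (C (Ac v i p) + C (Bc v i p) * X) * Pp v i

lemma esym_update (v : Fin n → ℂ) (i : Fin n) (x : ℂ) (p : ℕ) :
    esym (Function.update v i x) p = Ac v i p + x * Bc v i p := by
  unfold esym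
  rw [← Finset.sum_filter_add_sum_filter_not (powersetCard p univ) (fun s => i ∈ s)]
  have h2 : ∑ s ∈ (powersetCard p univ).filter (fun s => ¬ i ∈ s),
      ∏ l ∈ s, Function.update v i x l = Ac v i p := by
    unfold Ac
    rw [show (powersetCard p univ).filter (fun s => ¬ i ∈ s)
        = powersetCard p (univ.erase i) by
      ext s
      simp only [mem_filter, mem_powersetCard, subset_erase, subset_univ, true_and, and_comm]]
    refine Finset.sum_congr rfl fun s hs => Finset.prod_congr rfl fun l hl => ?_
    rw [mem_powersetCard] at hs
    have : l ≠ i := fun h => (subset_erase.mp hs.1).2 (h ▸ hl)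
    exact Function.update_of_ne this x v
  have h1 : ∑ s ∈ (powersetCard p univ).filter (fun s => i ∈ s),
      ∏ l ∈ s, Function.update v i x l = x * Bc v i p := by
    cases p with
    | zero =>
      rw [show (powersetCard 0 (univ : Finset (Fin n))).filter (fun s => i ∈ s) = ∅ by
        ext s
        simp only [mem_filter, Finset.powersetCard_zero, mem_singleton, Finset.notMem_empty,
          iff_false, not_and]
        rintro rfl h; exact absurd h (Finset.notMem_empty i)]
      simp [Bc]
    | succ q =>
      have : ∀ s ∈ (powersetCard (q+1) univ).filter (fun s => i ∈ s),
          ∏ l ∈ s, Function.update v i x l = x * ∏ l ∈ s.erase i, v l := by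
        intro s hs
        rw [mem_filter] at hs
        rw [← Finset.mul_prod_erase _ _ hs.2, Function.update_self]
        congr 1
        refine Finset.prod_congr rfl fun l hl => ?_
        exact Function.update_of_ne (Finset.ne_of_mem_erase hl) x v
      rw [Finset.sum_congr rfl this, ← Finset.mul_sum]
      congr 1
      show _ = Ac v i q
      unfold Ac
      refine Finset.sum_bij' (fun s _ => s.erase i) (fun t _ => insert i t) ?_ ?_ ?_ ?_ ?_
      · intro s hs
        rw [mem_filter, mem_powersetCard] at hs
        rw [mem_powersetCard]
        exact ⟨Finset.erase_subset_erase i hs.1.1,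
          by rw [Finset.card_erase_of_mem hs.2, hs.1.2]; rfl⟩
      · intro t ht
        rw [mem_powersetCard] at ht
        have hit : i ∉ t := fun h => (Finset.notMem_erase i univ) (ht.1 h)
        rw [mem_filter, mem_powersetCard]
        exact ⟨⟨Finset.subset_univ _, by rw [Finset.card_insert_of_notMem hit, ht.2]⟩,
          Finset.mem_insert_self i t⟩
      · intro s hs
        rw [mem_filter] at hs
        exact Finset.insert_erase hs.2
      · intro t ht
        rw [mem_powersetCard] at ht
        exact Finset.erase_insert (fun h => (Finset.notMem_erase i univ) (ht.1 h))
      · intro s hs; rfl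
  rw [h1, h2]; ring

lemma esym_eq (v : Fin n → ℂ) (i : Fin n) (p : ℕ) :
    esym v p = Ac v i p + v i * Bc v i p := by
  conv_lhs => rw [← Function.update_eq_self i v]
  exact esym_update v i (v i) p

lemma Ep_eq_zero (hn : 1 ≤ n) (u : Fin (n+1) → ℂ) (v : Fin n → ℂ)
    (hv : Function.Injective v) (j : Fin (n+1)) {p : ℕ} (hp : p ≤ n) :
    Ep u v j p = 0 := by
  apply poly_zero v hv
  · apply le_trans (Polynomial.natDegree_add_le _ _)
    apply max_le
    · apply le_trans (Polynomial.natDegree_sub_le _ _)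
      apply max_le
      · apply le_trans (Polynomial.natDegree_mul_le)
        rw [Polynomial.natDegree_C, Vp_natDegree]; omega
      · apply le_trans (Polynomial.natDegree_mul_le)
        rw [Polynomial.natDegree_C, Up_natDegree]; omega
    · apply Polynomial.natDegree_sum_le_of_forall_le
      intro i _
      apply le_trans (Polynomial.natDegree_mul_le)
      have h1 : (C (mu u v j i) * (C (Ac v i p) + C (Bc v i p) * X)).natDegree ≤ 1 := by
        apply le_trans (Polynomial.natDegree_C_mul_le _ _)
        apply le_trans (Polynomial.natDegree_add_le _ _)
        apply max_le (by simp)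
        apply le_trans (Polynomial.natDegree_C_mul_le _ _)
        simp
      rw [Pp_natDegree]
      omega
  · rw [Ep, Polynomial.coeff_add, Polynomial.coeff_sub, Polynomial.coeff_C_mul,
      Polynomial.coeff_C_mul, Vp_coeff_top, Up_coeff_top, Polynomial.finset_sum_coeff]
    have hterm : ∀ i : Fin n, (C (mu u v j i) * (C (Ac v i p) + C (Bc v i p) * X)
        * Pp v i).coeff n = mu u v j i * Bc v i p := by
      intro i
      rw [show C (mu u v j i) * (C (Ac v i p) + C (Bc v i p) * X) * Pp v i
          = C (mu u v j i * Ac v i p) * Pp v i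
            + C (mu u v j i * Bc v i p) * (X * Pp v i) by
        simp only [map_mul]; ring]
      rw [Polynomial.coeff_add, Polynomial.coeff_C_mul, Polynomial.coeff_C_mul]
      have l1 : (Pp v i).coeff n = 0 := Pp_coeff_n hn v i
      have l2 : (X * Pp v i).coeff n = 1 := by
        obtain ⟨m, rfl⟩ : ∃ m, n = m + 1 := ⟨n - 1, by omega⟩
        rw [Polynomial.coeff_X_mul]
        simpa using Pp_coeff_top (by omega) v i
      rw [l1, l2, mul_zero, mul_one, zero_add]
    rw [Finset.sum_congr rfl fun i (_ : i ∈ univ) => hterm i]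
    rw [lemma_L hn u v hv j hp]
    ring
  · intro m
    have hVm : (Vp v).eval (v m) = 0 := by
      rw [Vp_eval]
      exact Finset.prod_eq_zero (mem_univ m) (sub_self (v m))
    have hsum : (∑ i, C (mu u v j i) * (C (Ac v i p) + C (Bc v i p) * X) * Pp v i).eval (v m)
        = esym v p * (Up u j).eval (v m) := by
      rw [Polynomial.eval_finset_sum]
      rw [Finset.sum_eq_single m]
      · rw [Polynomial.eval_mul, Polynomial.eval_mul, Polynomial.eval_C, Pp_eval,
          Polynomial.eval_add, Polynomial.eval_C, Polynomial.eval_mul, Polynomial.eval_C,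
          Polynomial.eval_X]
        have hd := prod_sub_ne_zero v hv m
        have he : Ac v m p + Bc v m p * v m = esym v p := by
          rw [esym_eq v m p]; ring
        rw [he, mu]
        field_simp
      · intro i _ him
        rw [Polynomial.eval_mul, Pp_eval]
        have : ∏ l ∈ univ.erase i, (v m - v l) = 0 :=
          Finset.prod_eq_zero (Finset.mem_erase.mpr ⟨Ne.symm him, mem_univ m⟩) (sub_self (v m))
        rw [this, mul_zero]
      · intro h; exact absurd (mem_univ m) h
    rw [Ep, Polynomial.eval_add, Polynomial.eval_sub, Polynomial.eval_mul, Polynomial.eval_mul,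
      Polynomial.eval_C, Polynomial.eval_C, hVm, hsum]
    ring

/- ### evaluated form -/
lemma key_eval (hn : 1 ≤ n) (u : Fin (n+1) → ℂ) (v : Fin n → ℂ)
    (hv : Function.Injective v) (j : Fin (n+1)) {p : ℕ} (hp : p ≤ n) (x : ℂ) :
    esym (u ∘ j.succAbove) p * ∏ i, (x - v i)
      + ∑ i, mu u v j i * esym (Function.update v i x) p * ∏ l ∈ univ.erase i, (x - v l)
      = esym v p * ∏ k ∈ univ.erase j, (x - u k) := by
  have h0 : (Ep u v j p).eval x = 0 := by rw [Ep_eq_zero hn u v hv j hp]; simp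
  have hexp : (Ep u v j p).eval x
      = esym (u ∘ j.succAbove) p * ∏ i, (x - v i)
        - esym v p * ∏ k ∈ univ.erase j, (x - u k)
        + ∑ i, mu u v j i * esym (Function.update v i x) p * ∏ l ∈ univ.erase i, (x - v l) := by
    rw [Ep, Polynomial.eval_add, Polynomial.eval_sub, Polynomial.eval_mul, Polynomial.eval_mul,
      Polynomial.eval_C, Polynomial.eval_C, Polynomial.eval_finset_sum, Vp_eval, Up_eval]
    congr 1
    refine Finset.sum_congr rfl fun i _ => ?_
    rw [Polynomial.eval_mul, Polynomial.eval_mul, Polynomial.eval_C, Polynomial.eval_add,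
      Polynomial.eval_C, Polynomial.eval_mul, Polynomial.eval_C, Polynomial.eval_X,
      Pp_eval, esym_update v i x p]
    ring
  rw [hexp] at h0
  linear_combination h0

/- ### The sign lemma P3 -/
lemma g_swap (c x y : ℂ) : g c y x = - g c x y := by
  unfold g
  rw [show y - x = -(x - y) by ring, div_neg]

lemma P3 (c : ℂ) (u : Fin (n+1) → ℂ) (k : Fin (n+1)) :
    (-1:ℂ)^(k:ℕ) * (∏ i ∈ univ.erase k, g c (u k) (u i)) * DelHat c u k
      = (-1:ℂ)^n * ∏ pq ∈ univ.filter
          (fun pq : Fin (n+1) × Fin (n+1) => pq.2 < pq.1), g c (u pq.1) (u pq.2) := by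
  have hsplit := Finset.prod_filter_mul_prod_filter_not
    (univ.filter (fun pq : Fin (n+1) × Fin (n+1) => pq.2 < pq.1))
    (fun pq : Fin (n+1) × Fin (n+1) => pq.1 ≠ k ∧ pq.2 ≠ k)
    (fun pq : Fin (n+1) × Fin (n+1) => g c (u pq.1) (u pq.2))
  have hDel : (univ.filter (fun pq : Fin (n+1) × Fin (n+1) => pq.2 < pq.1)).filter
      (fun pq => pq.1 ≠ k ∧ pq.2 ≠ k)
      = univ.filter (fun pq : Fin (n+1) × Fin (n+1) => pq.2 < pq.1 ∧ pq.1 ≠ k ∧ pq.2 ≠ k) := by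
    rw [Finset.filter_filter]
  have hT : (univ.filter (fun pq : Fin (n+1) × Fin (n+1) => pq.2 < pq.1)).filter
      (fun pq => ¬(pq.1 ≠ k ∧ pq.2 ≠ k))
      = ((Iio k).image fun q => (k, q)) ∪ ((Ioi k).image fun p => (p, k)) := by
    ext pq
    simp only [Finset.mem_filter, Finset.mem_univ, true_and, Finset.mem_union,
      Finset.mem_image, Finset.mem_Iio, Finset.mem_Ioi, not_and_or, not_not]
    constructor
    · rintro ⟨hlt, h1 | h2⟩
      · exact Or.inl ⟨pq.2, h1 ▸ hlt, by rw [← h1]⟩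
      · exact Or.inr ⟨pq.1, h2 ▸ hlt, by rw [← h2]⟩
    · rintro (⟨q, hq, rfl⟩ | ⟨p, hp, rfl⟩)
      · exact ⟨hq, Or.inl rfl⟩
      · exact ⟨hp, Or.inr rfl⟩
  have hTprod : ∏ pq ∈ ((Iio k).image fun q => (k, q)) ∪ ((Ioi k).image fun p => (p, k)),
      g c (u pq.1) (u pq.2)
      = (∏ q ∈ Iio k, g c (u k) (u q)) * ∏ p ∈ Ioi k, g c (u p) (u k) := by
    rw [Finset.prod_union (by
      rw [Finset.disjoint_left]
      rintro pq hpq1 hpq2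
      rw [Finset.mem_image] at hpq1 hpq2
      obtain ⟨q, hq, rfl⟩ := hpq1
      obtain ⟨p, hp, hpk⟩ := hpq2
      rw [Finset.mem_Ioi] at hp
      have hpk' : p = k := congrArg Prod.fst hpk
      rw [hpk'] at hp
      exact lt_irrefl k hp)]
    rw [Finset.prod_image (fun a _ b _ h => (Prod.mk.injEq _ _ _ _).mp h |>.2),
      Finset.prod_image (fun a _ b _ h => (Prod.mk.injEq _ _ _ _).mp h |>.1)]
  have hIoi : ∏ p ∈ Ioi k, g c (u p) (u k)
      = (-1:ℂ)^(n - (k:ℕ)) * ∏ p ∈ Ioi k, g c (u k) (u p) := by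
    rw [Finset.prod_congr rfl (fun p (_ : p ∈ Ioi k) => g_swap c (u k) (u p))]
    rw [show (fun p => -(g c (u k) (u p))) = fun p => (-1) * g c (u k) (u p) by
      funext p; ring]
    rw [Finset.prod_mul_distrib, Finset.prod_const]
    congr 2
    rw [Fin.card_Ioi]
    omega
  have herase : (univ.erase k) = Iio k ∪ Ioi k := by
    ext i
    simp only [Finset.mem_erase, Finset.mem_univ, and_true, Finset.mem_union,
      Finset.mem_Iio, Finset.mem_Ioi]
    exact ⟨fun h => h.lt_or_gt, fun h => h.elim (fun h' => ne_of_lt h') fun h' => ne_of_gt h'⟩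
  have heraseprod : ∏ i ∈ univ.erase k, g c (u k) (u i)
      = (∏ q ∈ Iio k, g c (u k) (u q)) * ∏ p ∈ Ioi k, g c (u k) (u p) := by
    rw [herase, Finset.prod_union (by
      rw [Finset.disjoint_left]
      intro i h1 h2
      rw [Finset.mem_Iio] at h1
      rw [Finset.mem_Ioi] at h2
      exact absurd h1 (not_lt.mpr (le_of_lt h2)))]
  have hk : (k:ℕ) ≤ n := Nat.lt_succ_iff.mp k.isLt
  have h2 : ((-1:ℂ))^(n-(k:ℕ)) * (-1:ℂ)^(n-(k:ℕ)) = 1 := by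
    rw [← mul_pow]; norm_num
  have h3 : ((-1:ℂ))^(n-(k:ℕ)) * (-1:ℂ)^(k:ℕ) = (-1:ℂ)^n := by
    rw [← pow_add, Nat.sub_add_cancel hk]
  rw [← hsplit, hDel]
  unfold DelHat
  rw [hT, hTprod, hIoi, heraseprod]
  linear_combination ((∏ pq ∈ univ.filter
      (fun pq : Fin (n+1) × Fin (n+1) => pq.2 < pq.1 ∧ pq.1 ≠ k ∧ pq.2 ≠ k),
      g c (u pq.1) (u pq.2)) * (∏ q ∈ Iio k, g c (u k) (u q))
    * (∏ p ∈ Ioi k, g c (u k) (u p)))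
    * ((-1:ℂ)^(n-(k:ℕ)) * h3 - (-1:ℂ)^(k:ℕ) * h2)

/- ### The row identity -/
lemma Rk (c : ℂ) (hc : c ≠ 0) (hn : 1 ≤ n) (u : Fin (n+1) → ℂ)
    (hu : Function.Injective u) (v : Fin n → ℂ) (hv : Function.Injective v)
    (huv : ∀ (j : Fin (n+1)) (i : Fin n), u j ≠ v i)
    (a : Fin (n+1) → Fin (n+1) → ℂ) (j k : Fin (n+1)) :
    (-1:ℂ)^(k:ℕ) * (Mmat c u v a j k * DelHat c u k)
      = ∑ i, (-((-1:ℂ)^n * ∏ pq ∈ univ.filter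
          (fun pq : Fin (n+1) × Fin (n+1) => pq.2 < pq.1), g c (u pq.1) (u pq.2))
          * mu u v j i / c) * Om c u v a i k := by
  set κ : ℂ := (-1:ℂ)^n * ∏ pq ∈ univ.filter
      (fun pq : Fin (n+1) × Fin (n+1) => pq.2 < pq.1), g c (u pq.1) (u pq.2) with hκdef
  have hVk : (∏ i, (u k - v i)) ≠ 0 :=
    Finset.prod_ne_zero_iff.mpr fun i _ => sub_ne_zero_of_ne (huv k i)
  apply mul_right_cancel₀ hVk
  have hY : (Y (fun p => a p k) (u ∘ j.succAbove)) * (∏ i, (u k - v i))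
      + ∑ i, mu u v j i * Y (fun p => a p k) (Function.update v i (u k))
          * (∏ l ∈ univ.erase i, (u k - v l))
      = Y (fun p => a p k) v * (∏ l ∈ univ.erase j, (u k - u l)) := by
    unfold Y
    rw [Finset.sum_mul, Finset.sum_mul]
    have hsw : ∑ i, mu u v j i * (∑ p : Fin (n+1), a p k
          * esym (Function.update v i (u k)) (p:ℕ)) * (∏ l ∈ univ.erase i, (u k - v l))
        = ∑ p : Fin (n+1), ∑ i, a p k * (mu u v j i
          * esym (Function.update v i (u k)) (p:ℕ) * (∏ l ∈ univ.erase i, (u k - v l))) := by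
      rw [Finset.sum_comm]
      refine Finset.sum_congr rfl fun i _ => ?_
      rw [Finset.mul_sum, Finset.sum_mul]
      refine Finset.sum_congr rfl fun p _ => by ring
    rw [hsw, ← Finset.sum_add_distrib]
    refine Finset.sum_congr rfl fun p _ => ?_
    rw [← Finset.mul_sum]
    have hkey := key_eval hn u v hv j (p := (p:ℕ)) (Nat.lt_succ_iff.mp p.isLt) (u k)
    calc a p k * esym (u ∘ j.succAbove) (p:ℕ) * (∏ i, (u k - v i))
          + a p k * (∑ i, mu u v j i * esym (Function.update v i (u k)) (p:ℕ)
            * (∏ l ∈ univ.erase i, (u k - v l)))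
        = a p k * (esym (u ∘ j.succAbove) (p:ℕ) * (∏ i, (u k - v i))
            + ∑ i, mu u v j i * esym (Function.update v i (u k)) (p:ℕ)
            * (∏ l ∈ univ.erase i, (u k - v l))) := by ring
      _ = a p k * (esym v (p:ℕ) * ∏ l ∈ univ.erase j, (u k - u l)) := by rw [hkey]
      _ = a p k * esym v (p:ℕ) * ∏ l ∈ univ.erase j, (u k - u l) := by ring
  have hgV : ∀ i : Fin n, g c (u k) (v i) * ∏ l, (u k - v l)
      = c * ∏ l ∈ univ.erase i, (u k - v l) := by
    intro i
    rw [← Finset.mul_prod_erase univ (fun l => u k - v l) (Finset.mem_univ i)]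
    unfold g
    rw [← mul_assoc, div_mul_cancel₀ _ (sub_ne_zero_of_ne (huv k i))]
  have hRHS : (∑ i, (-κ * mu u v j i / c) * Om c u v a i k) * (∏ i, (u k - v i))
      = -κ * (Y (fun p => a p k) v * (∏ l ∈ univ.erase j, (u k - u l)))
        + κ * ((Y (fun p => a p k) (u ∘ j.succAbove)) * (∏ i, (u k - v i))) := by
    rw [Finset.sum_mul]
    have hterm : ∀ i : Fin n, (-κ * mu u v j i / c) * Om c u v a i k * (∏ l, (u k - v l))
        = -κ * (mu u v j i * Y (fun p => a p k) (Function.update v i (u k))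
            * (∏ l ∈ univ.erase i, (u k - v l))) := by
      intro i
      have h1 := hgV i
      calc (-κ * mu u v j i / c) * Om c u v a i k * (∏ l, (u k - v l))
          = (-κ * mu u v j i / c) * c * (Y (fun p => a p k) (Function.update v i (u k))
              * (∏ l ∈ univ.erase i, (u k - v l))) := by
            show (-κ * mu u v j i / c) * (g c (u k) (v i)
              * Y (fun p => a p k) (Function.update v i (u k))) * (∏ l, (u k - v l)) = _
            linear_combination (-κ * mu u v j i / c)
              * Y (fun p => a p k) (Function.update v i (u k)) * h1
        _ = -κ * (mu u v j i * Y (fun p => a p k) (Function.update v i (u k))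
              * (∏ l ∈ univ.erase i, (u k - v l))) := by
            rw [div_mul_cancel₀ _ hc]; ring
    rw [Finset.sum_congr rfl fun i _ => hterm i, ← Finset.mul_sum]
    linear_combination (-κ) * hY
  rw [hRHS]
  have hP3 := P3 c u k
  rw [← hκdef] at hP3
  show (-1:ℂ)^(k:ℕ) * (((∏ i ∈ Finset.univ.erase k, g c (u k) (u i))
      * Y (fun p => a p k) (u ∘ j.succAbove)
      - (if j = k then (1:ℂ) else 0) * ((∏ i, g c (u j) (v i)) * Y (fun p => a p j) v))
      * DelHat c u k) * (∏ i, (u k - v i)) = _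
  by_cases hjk : j = k
  · subst hjk
    rw [if_pos rfl]
    have hAU : (∏ i ∈ Finset.univ.erase j, g c (u j) (u i))
        * (∏ l ∈ univ.erase j, (u j - u l)) = c^n := by
      rw [← Finset.prod_mul_distrib]
      rw [Finset.prod_congr rfl (fun i hi => by
        unfold g
        exact div_mul_cancel₀ c (sub_ne_zero_of_ne
          (fun h => (Finset.ne_of_mem_erase hi) (hu h.symm))))]
      rw [Finset.prod_const, card_erase_univ]
    have hgVj : (∏ i, g c (u j) (v i)) * (∏ i, (u j - v i)) = c^n := by
      rw [← Finset.prod_mul_distrib]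
      rw [Finset.prod_congr rfl (fun i _ => by
        unfold g
        exact div_mul_cancel₀ c (sub_ne_zero_of_ne (huv j i)))]
      rw [Finset.prod_const, Finset.card_univ, Fintype.card_fin]
    linear_combination (Y (fun p => a p j) (u ∘ j.succAbove) * (∏ i, (u j - v i))
        - Y (fun p => a p j) v * (∏ l ∈ univ.erase j, (u j - u l))) * hP3
      + Y (fun p => a p j) v * (-1:ℂ)^(j:ℕ) * DelHat c u j * (hAU - hgVj)
  · rw [if_neg hjk]
    have hU0 : (∏ l ∈ univ.erase j, (u k - u l)) = 0 :=
      Finset.prod_eq_zero (Finset.mem_erase.mpr ⟨Ne.symm hjk, Finset.mem_univ k⟩) (sub_self (u k))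
    rw [hU0]
    linear_combination (Y (fun p => a p k) (u ∘ j.succAbove) * (∏ i, (u k - v i))) * hP3

end MSS

open Finset in
/-- the vector `X_ℓ = Δ(û_ℓ) · Ω̂_ℓ` solves the linear system
`∑_k M_{jk} X_k = 0` for every `j`. -/
theorem minors_solve_system (c : ℂ) (hc : c ≠ 0) (n : ℕ) (hn : 1 ≤ n)
    (u : Fin (n + 1) → ℂ) (hu : Function.Injective u)
    (v : Fin n → ℂ) (hv : Function.Injective v)
    (huv : ∀ (j : Fin (n + 1)) (i : Fin n), u j ≠ v i)
    (a : Fin (n + 1) → Fin (n + 1) → ℂ) :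
    ∀ j : Fin (n + 1),
      ∑ k : Fin (n + 1), Mmat c u v a j k * (DelHat c u k * OmHat c u v a k) = 0 := by
  intro j
  classical
  set N : Matrix (Fin (n+1)) (Fin (n+1)) ℂ :=
    Matrix.of (Fin.cons (fun k => (-1:ℂ)^(k:ℕ) * (Mmat c u v a j k * DelHat c u k))
      (fun i => Om c u v a i)) with hN
  have hdet : N.det
      = ∑ k : Fin (n+1), Mmat c u v a j k * (DelHat c u k * OmHat c u v a k) := by
    rw [Matrix.det_succ_row_zero]
    refine Finset.sum_congr rfl fun k _ => ?_
    have h0 : N 0 k = (-1:ℂ)^(k:ℕ) * (Mmat c u v a j k * DelHat c u k) := by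
      simp [hN]
    have hsub : N.submatrix Fin.succ k.succAbove = (Om c u v a).submatrix id k.succAbove := by
      ext i l
      simp [hN, Matrix.submatrix_apply]
    rw [h0, hsub]
    simp only [OmHat]
    have hsq : (-1:ℂ)^(k:ℕ) * (-1:ℂ)^(k:ℕ) = 1 := by rw [← mul_pow]; norm_num
    linear_combination (Mmat c u v a j k * DelHat c u k
      * ((Om c u v a).submatrix id k.succAbove).det) * hsq
  have hdep : N.det = 0 := by
    apply Matrix.exists_vecMul_eq_zero_iff.mp
    refine ⟨Fin.cons 1 (fun i => -(-((-1:ℂ)^n * ∏ pq ∈ univ.filter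
        (fun pq : Fin (n+1) × Fin (n+1) => pq.2 < pq.1), g c (u pq.1) (u pq.2))
        * MSS.mu u v j i / c)), ?_, ?_⟩
    · intro h
      have h0 : (0 : Fin (n+1) → ℂ) 0 = 1 := by rw [← h]; simp
      simp at h0
    · funext k
      have hvm : (Matrix.vecMul (Fin.cons 1 (fun i => -(-((-1:ℂ)^n * ∏ pq ∈ univ.filter
          (fun pq : Fin (n+1) × Fin (n+1) => pq.2 < pq.1), g c (u pq.1) (u pq.2))
          * MSS.mu u v j i / c))) N) k
          = (-1:ℂ)^(k:ℕ) * (Mmat c u v a j k * DelHat c u k)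
            + ∑ i, (-(-((-1:ℂ)^n * ∏ pq ∈ univ.filter
              (fun pq : Fin (n+1) × Fin (n+1) => pq.2 < pq.1), g c (u pq.1) (u pq.2))
              * MSS.mu u v j i / c)) * Om c u v a i k := by
        rw [Matrix.vecMul, dotProduct, Fin.sum_univ_succ]
        simp [hN]
      rw [hvm, MSS.Rk c hc hn u hu v hv huv a j k]
      simp only [Pi.zero_apply]
      rw [← Finset.sum_add_distrib]
      rw [Finset.sum_eq_zero fun i _ => by ring]
  rw [← hdet]
  exact hdep
end

section
/- Assume in addition that v_1,…,v_n are pairwise distinct. Then for every X ∈ ℂ^{n+1} the following are equivalent: (i) Σ_{k=1}^{n+1} M_{jk} X_k = 0 for all j = 1, …, n+1; (ii) Σ_{k=1}^{n+1} (∏_{i≠k} g(u_k,u_i)) · Ω_{jk} · X_k = 0 for all j = 1, …, n. -/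
open Polynomial Finset

/- ### Generating polynomial and its relation to `Y` -/

noncomputable def Pg {m : ℕ} (w : Fin m → ℂ) : ℂ[X] := ∏ i, (X + C (w i))

lemma Pg_coeff {m : ℕ} (w : Fin m → ℂ) (p : ℕ) (hp : p ≤ m) :
    (Pg w).coeff (m - p) = esym w p := by
  rw [Pg, Finset.prod_X_add_C_coeff _ _ (by simp [Nat.sub_le]), esym]
  simp [Nat.sub_sub_self hp]

lemma Y_eq_L {n : ℕ} (a : Fin (n + 1) → ℂ) (w : Fin n → ℂ) :
    Y a w = ∑ p : Fin (n + 1), a p * (Pg w).coeff (n - (p : ℕ)) := by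
  unfold Y
  refine Finset.sum_congr rfl fun p _ => ?_
  rw [Pg_coeff w p (by omega)]

lemma Pg_degree {m : ℕ} (w : Fin m → ℂ) : (Pg w).degree < (m + 1 : ℕ) := by
  have h : (Pg w).degree ≤ (m : WithBot ℕ) := by
    unfold Pg
    refine le_trans (Polynomial.degree_prod_le _ _) ?_
    rw [Finset.sum_congr rfl fun i _ => Polynomial.degree_X_add_C (w i)]
    simp [Finset.card_univ]
  exact lt_of_le_of_lt h (by exact_mod_cast Nat.lt_succ_self m)

lemma eval_Pg {m : ℕ} (w : Fin m → ℂ) (t : ℂ) : eval t (Pg w) = ∏ i, (t + w i) := by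
  simp [Pg, eval_prod]

lemma Pg_update {n : ℕ} (v : Fin n → ℂ) (l0 : Fin n) (s : ℂ) :
    Pg (Function.update v l0 s) = (X + C s) * ∏ l ∈ univ.erase l0, (X + C (v l)) := by
  rw [Pg, ← Finset.mul_prod_erase _ _ (mem_univ l0), Function.update_self]
  congr 1
  exact Finset.prod_congr rfl fun l hl => by
    rw [Function.update_of_ne (Finset.ne_of_mem_erase hl)]

/- ### Lagrange interpolation -/

lemma lagrange_expand {N : ℕ} (z : Fin (N + 1) → ℂ) (hz : Function.Injective z)
    (f : ℂ[X]) (hf : f.degree < (N + 1 : ℕ)) :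
    f = ∑ j : Fin (N + 1), C (f.eval (z j) * ∏ i ∈ univ.erase j, (z j - z i)⁻¹) *
        ∏ i ∈ univ.erase j, (X - C (z i)) := by
  have h := Lagrange.eq_interpolate (s := (univ : Finset (Fin (N + 1)))) (v := z)
    hz.injOn (by simpa using hf)
  rw [Lagrange.interpolate_apply] at h
  nth_rewrite 1 [h]
  refine Finset.sum_congr rfl fun j _ => ?_
  rw [Lagrange.basis]
  simp_rw [Lagrange.basisDivisor]
  rw [Finset.prod_mul_distrib, ← map_prod]
  rw [map_mul]; ring

/- ### products over `erase` -/

lemma erase_eq_image {N : ℕ} (p : Fin (N + 1)) :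
    (univ : Finset (Fin (N + 1))).erase p = Finset.image p.succAbove univ := by
  ext x
  simp [Fin.exists_succAbove_eq_iff, eq_comm]

lemma prod_erase_fin {M : Type*} [CommMonoid M] {N : ℕ} (h : Fin (N + 1) → M) (p : Fin (N + 1)) :
    ∏ i ∈ univ.erase p, h i = ∏ i : Fin N, h (p.succAbove i) := by
  rw [erase_eq_image, Finset.prod_image (fun a _ b _ hab => p.succAbove_right_injective hab)]

lemma prod_erase_zero {M : Type*} [CommMonoid M] {N : ℕ} (h : Fin (N + 1) → M) :
    ∏ i ∈ univ.erase (0 : Fin (N + 1)), h i = ∏ l : Fin N, h l.succ := by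
  rw [prod_erase_fin h 0]
  simp [Fin.succAbove_zero]

lemma erase_succ_eq_image {N : ℕ} (l0 : Fin N) :
    ((univ : Finset (Fin (N + 1))).erase l0.succ).erase 0
      = Finset.image Fin.succ (univ.erase l0) := by
  ext x
  induction x using Fin.cases <;>
    simp [Fin.succ_ne_zero, Fin.succ_inj, eq_comm, (Fin.succ_ne_zero _).symm]

lemma prod_erase_succ {M : Type*} [CommMonoid M] {N : ℕ} (h : Fin (N + 1) → M) (l0 : Fin N) :
    ∏ i ∈ univ.erase l0.succ, h i = h 0 * ∏ l ∈ univ.erase l0, h l.succ := by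
  rw [← Finset.mul_prod_erase _ h (show (0 : Fin (N+1)) ∈ univ.erase l0.succ by
    simp [(Fin.succ_ne_zero l0).symm]), erase_succ_eq_image,
    Finset.prod_image (fun a _ b _ hab => Fin.succ_injective _ hab)]

/- ### key polynomial identity -/

lemma keyP {n : ℕ} (u : Fin (n + 1) → ℂ) (v : Fin n → ℂ) (hv : Function.Injective v)
    (huv : ∀ (j : Fin (n + 1)) (i : Fin n), u j ≠ v i) (j k : Fin (n + 1)) :
    Pg (u ∘ j.succAbove) =
      C ((∏ i ∈ univ.erase j, (u i - u k)) * ∏ l : Fin n, (v l - u k)⁻¹) * Pg v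
      + ∑ l : Fin n,
        C ((∏ i ∈ univ.erase j, (u i - v l)) *
            ((u k - v l)⁻¹ * ∏ i ∈ univ.erase l, (v i - v l)⁻¹)) *
          Pg (Function.update v l (u k)) := by
  set z : Fin (n + 1) → ℂ := Fin.cons (-(u k)) (fun l => -(v l)) with hzdef
  have hz : Function.Injective z := by
    intro x y hxy
    induction x using Fin.cases with
    | zero =>
      induction y using Fin.cases with
      | zero => rfl
      | succ i =>
        simp only [hzdef, Fin.cons_zero, Fin.cons_succ, neg_inj] at hxy
        exact absurd hxy (huv k i)
    | succ i =>
      induction y using Fin.cases with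
      | zero =>
        simp only [hzdef, Fin.cons_zero, Fin.cons_succ, neg_inj] at hxy
        exact absurd hxy.symm (huv k i)
      | succ i' =>
        simp only [hzdef, Fin.cons_succ, neg_inj] at hxy
        exact congrArg Fin.succ (hv hxy)
  have h := lagrange_expand z hz (Pg (u ∘ j.succAbove)) (Pg_degree _)
  rw [Fin.sum_univ_succ] at h
  rw [h]
  congr 1
  · -- head term
    have h1 : ∏ i ∈ univ.erase (0 : Fin (n+1)), (X - C (z i)) = Pg v := by
      rw [prod_erase_zero, Pg]
      refine Finset.prod_congr rfl fun l _ => ?_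
      simp [hzdef, Fin.cons_succ, sub_neg_eq_add]
    rw [h1]
    congr 2
    have h2 : eval (z 0) (Pg (u ∘ j.succAbove)) = ∏ i ∈ univ.erase j, (u i - u k) := by
      rw [eval_Pg, prod_erase_fin (fun i => u i - u k) j]
      refine Finset.prod_congr rfl fun i _ => ?_
      simp [hzdef, Fin.cons_zero, Function.comp]
      ring
    rw [h2]
    congr 1
    rw [prod_erase_zero]
    refine Finset.prod_congr rfl fun l _ => ?_
    simp [hzdef, Fin.cons_zero, Fin.cons_succ]
    ring_nf
  · -- sum terms
    refine Finset.sum_congr rfl fun l0 _ => ?_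
    have h1 : ∏ i ∈ univ.erase l0.succ, (X - C (z i)) = Pg (Function.update v l0 (u k)) := by
      rw [prod_erase_succ (fun i => X - C (z i)), Pg_update]
      simp only [hzdef, Fin.cons_zero, Fin.cons_succ, map_neg, sub_neg_eq_add]
    rw [h1]
    congr 2
    have h2 : eval (z l0.succ) (Pg (u ∘ j.succAbove)) = ∏ i ∈ univ.erase j, (u i - v l0) := by
      rw [eval_Pg, prod_erase_fin (fun i => u i - v l0) j]
      refine Finset.prod_congr rfl fun i _ => ?_
      simp [hzdef, Fin.cons_succ, Function.comp]
      ring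
    rw [h2]
    congr 1
    rw [prod_erase_succ (fun i => (z l0.succ - z i)⁻¹)]
    congr 1
    · simp [hzdef, Fin.cons_zero, Fin.cons_succ]
      ring_nf
    · refine Finset.prod_congr rfl fun l hl => ?_
      simp [hzdef, Fin.cons_succ]
      ring_nf

lemma keyY {n : ℕ} (u : Fin (n + 1) → ℂ) (v : Fin n → ℂ) (hv : Function.Injective v)
    (huv : ∀ (j : Fin (n + 1)) (i : Fin n), u j ≠ v i) (j k : Fin (n + 1))
    (b : Fin (n + 1) → ℂ) :
    Y b (u ∘ j.succAbove) =
      ((∏ i ∈ univ.erase j, (u i - u k)) * ∏ l : Fin n, (v l - u k)⁻¹) * Y b v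
      + ∑ l : Fin n,
        ((∏ i ∈ univ.erase j, (u i - v l)) *
            ((u k - v l)⁻¹ * ∏ i ∈ univ.erase l, (v i - v l)⁻¹)) *
          Y b (Function.update v l (u k)) := by
  simp only [Y_eq_L]
  rw [keyP u v hv huv j k]
  simp only [coeff_add, Polynomial.finset_sum_coeff, coeff_C_mul, mul_add, Finset.mul_sum,
    Finset.sum_add_distrib]
  congr 1
  · exact Finset.sum_congr rfl fun p _ => by ring
  · rw [Finset.sum_comm]
    refine Finset.sum_congr rfl fun l _ => ?_
    exact Finset.sum_congr rfl fun p _ => by ring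

noncomputable def Acoef (c : ℂ) {n : ℕ} (u : Fin (n + 1) → ℂ) (v : Fin n → ℂ)
    (j : Fin (n + 1)) (l : Fin n) : ℂ :=
  (∏ i ∈ univ.erase j, (u i - v l)) / (c * ∏ i ∈ univ.erase l, (v i - v l))

lemma lemma1 (c : ℂ) (hc : c ≠ 0) {n : ℕ} (u : Fin (n + 1) → ℂ) (hu : Function.Injective u)
    (v : Fin n → ℂ) (hv : Function.Injective v)
    (huv : ∀ (j : Fin (n + 1)) (i : Fin n), u j ≠ v i)
    (a : Fin (n + 1) → Fin (n + 1) → ℂ) (j k : Fin (n + 1)) :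
    Mmat c u v a j k = ∑ l : Fin n, Acoef c u v j l *
      ((∏ i ∈ univ.erase k, g c (u k) (u i)) * Om c u v a l k) := by
  have hk := keyY u v hv huv j k (fun p => a p k)
  simp only [Mmat, Om, Matrix.of_apply]
  rw [hk, mul_add, Finset.mul_sum]
  have hHead : (∏ i ∈ univ.erase k, g c (u k) (u i)) *
      (((∏ i ∈ univ.erase j, (u i - u k)) * ∏ l : Fin n, (v l - u k)⁻¹) *
        Y (fun p => a p k) v)
      = (if j = k then 1 else 0) * ((∏ i, g c (u j) (v i)) * Y (fun p => a p j) v) := by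
    by_cases hjk : j = k
    · subst hjk
      rw [if_pos rfl, one_mul, ← mul_assoc]
      congr 1
      rw [← mul_assoc, ← Finset.prod_mul_distrib]
      have h1 : ∀ i ∈ univ.erase j, g c (u j) (u i) * (u i - u j) = -c := by
        intro i hi
        have hne : u j - u i ≠ 0 :=
          sub_ne_zero.2 fun h => (Finset.ne_of_mem_erase hi) (hu h.symm)
        rw [g]
        field_simp
        ring
      rw [Finset.prod_congr rfl h1, Finset.prod_const,
        Finset.card_erase_of_mem (mem_univ j), Finset.card_univ, Fintype.card_fin,
        Nat.add_sub_cancel]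
      have h2 : ((-c) ^ n) * ∏ l : Fin n, (v l - u j)⁻¹ = ∏ l : Fin n, (-c) * (v l - u j)⁻¹ := by
        rw [Finset.prod_mul_distrib, Finset.prod_const, Finset.card_univ, Fintype.card_fin]
      rw [h2]
      refine Finset.prod_congr rfl fun l _ => ?_
      rw [g, show u j - v l = -(v l - u j) by ring, div_eq_mul_inv, inv_neg]
      ring
    · simp only [if_neg hjk, zero_mul]
      have h0 : (∏ i ∈ univ.erase j, (u i - u k)) = 0 :=
        Finset.prod_eq_zero (Finset.mem_erase.2 ⟨Ne.symm hjk, mem_univ k⟩) (by ring)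
      rw [h0]
      ring
  rw [hHead, add_sub_cancel_left]
  refine Finset.sum_congr rfl fun l _ => ?_
  have h1 : u k - v l ≠ 0 := sub_ne_zero.2 (huv k l)
  have h2 : (∏ i ∈ univ.erase l, (v i - v l)) ≠ 0 :=
    Finset.prod_ne_zero_iff.2 fun i hi =>
      sub_ne_zero.2 fun h => (Finset.ne_of_mem_erase hi) (hv h)
  rw [Acoef, g, Finset.prod_inv_distrib]
  field_simp

noncomputable def Bcoef (c : ℂ) {n : ℕ} (u : Fin (n + 1) → ℂ) (v : Fin n → ℂ)
    (l : Fin n) (j : Fin (n + 1)) : ℂ :=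
  c * (∏ i ∈ univ.erase l, (v i - u j)) / (∏ i ∈ univ.erase j, (u i - u j))

lemma lemma2 (c : ℂ) (hc : c ≠ 0) {n : ℕ} (u : Fin (n + 1) → ℂ) (hu : Function.Injective u)
    (v : Fin n → ℂ) (hv : Function.Injective v) (l m : Fin n) :
    ∑ j : Fin (n + 1), Bcoef c u v l j * Acoef c u v j m = if l = m then 1 else 0 := by
  have hD : (∏ i ∈ univ.erase m, (v i - v m)) ≠ 0 :=
    Finset.prod_ne_zero_iff.2 fun i hi =>
      sub_ne_zero.2 fun h => (Finset.ne_of_mem_erase hi) (hv h)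
  have hdeg : (∏ i ∈ univ.erase l, (C (v i) - X : ℂ[X])).degree < ((n + 1 : ℕ) : WithBot ℕ) := by
    have h1 : ∀ i ∈ univ.erase l, (C (v i) - X : ℂ[X]).degree = 1 := fun i _ => by
      rw [show (C (v i) - X : ℂ[X]) = -(X - C (v i)) by ring, degree_neg, degree_X_sub_C]
    have h2 : (∏ i ∈ univ.erase l, (C (v i) - X : ℂ[X])).degree ≤ (n : WithBot ℕ) := by
      refine le_trans (degree_prod_le _ _) ?_
      rw [Finset.sum_congr rfl h1, Finset.sum_const, Finset.card_erase_of_mem (mem_univ l),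
        Finset.card_univ, Fintype.card_fin]
      have hle : ((n - 1 : ℕ) : WithBot ℕ) ≤ (n : WithBot ℕ) := by
        exact_mod_cast Nat.sub_le n 1
      simpa using hle
    exact lt_of_le_of_lt h2 (by exact_mod_cast Nat.lt_succ_self n)
  have h := congrArg (eval (v m)) (lagrange_expand u hu _ hdeg)
  simp only [eval_finset_sum, eval_mul, eval_prod, eval_sub, eval_C, eval_X] at h
  have hterm : ∀ j : Fin (n + 1), Bcoef c u v l j * Acoef c u v j m
      = (∏ i ∈ univ.erase l, (v i - u j)) * (∏ i ∈ univ.erase j, (u j - u i)⁻¹) *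
          (∏ i ∈ univ.erase j, (v m - u i)) / (∏ i ∈ univ.erase m, (v i - v m)) := by
    intro j
    have hQ : (∏ i ∈ univ.erase j, (u i - u j)) ≠ 0 :=
      Finset.prod_ne_zero_iff.2 fun i hi =>
        sub_ne_zero.2 fun h' => (Finset.ne_of_mem_erase hi) (hu h')
    have hsign : (∏ i ∈ univ.erase j, (u i - v m)) * (∏ i ∈ univ.erase j, (u i - u j))⁻¹
        = (∏ i ∈ univ.erase j, (v m - u i)) * (∏ i ∈ univ.erase j, (u j - u i))⁻¹ := by
      rw [← Finset.prod_inv_distrib, ← Finset.prod_mul_distrib,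
        ← Finset.prod_inv_distrib, ← Finset.prod_mul_distrib]
      refine Finset.prod_congr rfl fun i _ => ?_
      rw [show u i - v m = -(v m - u i) by ring, show u i - u j = -(u j - u i) by ring, inv_neg]
      ring
    rw [Bcoef, Acoef]
    have e1 : c * (∏ i ∈ univ.erase l, (v i - u j)) / (∏ i ∈ univ.erase j, (u i - u j)) *
        ((∏ i ∈ univ.erase j, (u i - v m)) / (c * ∏ i ∈ univ.erase m, (v i - v m)))
        = (∏ i ∈ univ.erase l, (v i - u j)) *
            ((∏ i ∈ univ.erase j, (u i - v m)) * (∏ i ∈ univ.erase j, (u i - u j))⁻¹) *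
            (∏ i ∈ univ.erase m, (v i - v m))⁻¹ := by
      field_simp
    rw [e1, hsign, div_eq_mul_inv, Finset.prod_inv_distrib]
    ring
  rw [Finset.sum_congr rfl fun j _ => hterm j, ← Finset.sum_div]
  rw [show (∑ j : Fin (n+1), (∏ i ∈ univ.erase l, (v i - u j)) *
      (∏ i ∈ univ.erase j, (u j - u i)⁻¹) * (∏ i ∈ univ.erase j, (v m - u i)))
      = ∏ i ∈ univ.erase l, (v i - v m) from ?_]
  · by_cases hlm : l = m
    · subst hlm; rw [if_pos rfl, div_self hD]
    · rw [if_neg hlm]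
      rw [Finset.prod_eq_zero (Finset.mem_erase.2 ⟨Ne.symm hlm, mem_univ m⟩) (by ring), zero_div]
  · rw [h]

/-- the system `M · X = 0` is equivalent to the reduced system
`∑_k (∏_{i≠k} g(u_k,u_i)) Ω_{jk} X_k = 0`, `j = 1, …, n`. -/
theorem system_equiv_reduced_system (c : ℂ) (hc : c ≠ 0) (n : ℕ) (hn : 1 ≤ n)
    (u : Fin (n + 1) → ℂ) (hu : Function.Injective u)
    (v : Fin n → ℂ) (hv : Function.Injective v)
    (huv : ∀ (j : Fin (n + 1)) (i : Fin n), u j ≠ v i)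
    (a : Fin (n + 1) → Fin (n + 1) → ℂ) (X : Fin (n + 1) → ℂ) :
    (∀ j : Fin (n + 1), ∑ k : Fin (n + 1), Mmat c u v a j k * X k = 0) ↔
      (∀ j : Fin n, ∑ k : Fin (n + 1),
        (∏ i ∈ Finset.univ.erase k, g c (u k) (u i)) * Om c u v a j k * X k = 0) := by
  constructor
  · intro hM j
    have key : ∀ k : Fin (n + 1),
        (∏ i ∈ univ.erase k, g c (u k) (u i)) * Om c u v a j k
          = ∑ j' : Fin (n + 1), Bcoef c u v j j' * Mmat c u v a j' k := by
      intro k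
      rw [Finset.sum_congr rfl fun j' (_ : j' ∈ univ) => by
        rw [lemma1 c hc u hu v hv huv a j' k]]
      simp only [Finset.mul_sum]
      rw [Finset.sum_comm]
      have hswap : ∀ l : Fin n,
          (∑ j' : Fin (n + 1), Bcoef c u v j j' *
            (Acoef c u v j' l * ((∏ i ∈ univ.erase k, g c (u k) (u i)) * Om c u v a l k)))
          = (∑ j' : Fin (n + 1), Bcoef c u v j j' * Acoef c u v j' l) *
              ((∏ i ∈ univ.erase k, g c (u k) (u i)) * Om c u v a l k) := by
        intro l
        rw [Finset.sum_mul]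
        exact Finset.sum_congr rfl fun j' _ => by ring
      rw [Finset.sum_congr rfl fun l (_ : l ∈ univ) => hswap l]
      rw [Finset.sum_congr rfl fun l (_ : l ∈ univ) => by rw [lemma2 c hc u hu v hv j l]]
      simp [ite_mul]
    calc ∑ k : Fin (n + 1), (∏ i ∈ univ.erase k, g c (u k) (u i)) * Om c u v a j k * X k
        = ∑ k : Fin (n + 1), (∑ j' : Fin (n + 1), Bcoef c u v j j' * Mmat c u v a j' k) * X k :=
          Finset.sum_congr rfl fun k _ => by rw [key k]
      _ = ∑ j' : Fin (n + 1), Bcoef c u v j j' * ∑ k : Fin (n + 1), Mmat c u v a j' k * X k := by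
          simp only [Finset.sum_mul, Finset.mul_sum]
          rw [Finset.sum_comm]
          exact Finset.sum_congr rfl fun _ _ => Finset.sum_congr rfl fun _ _ => by ring
      _ = 0 := by simp [hM]
  · intro hO j
    calc ∑ k : Fin (n + 1), Mmat c u v a j k * X k
        = ∑ k : Fin (n + 1), (∑ l : Fin n, Acoef c u v j l *
            ((∏ i ∈ univ.erase k, g c (u k) (u i)) * Om c u v a l k)) * X k :=
          Finset.sum_congr rfl fun k _ => by rw [lemma1 c hc u hu v hv huv a j k]
      _ = ∑ l : Fin n, Acoef c u v j l *
            ∑ k : Fin (n + 1), (∏ i ∈ univ.erase k, g c (u k) (u i)) * Om c u v a l k * X k := by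
          simp only [Finset.sum_mul, Finset.mul_sum]
          rw [Finset.sum_comm]
          exact Finset.sum_congr rfl fun _ _ => Finset.sum_congr rfl fun _ _ => by ring
      _ = 0 := by simp [hO]
end

section
/- Let u ∈ ℂ and v = (v_1,…,v_n) ∈ ℂ^n with u ≠ v_i for all i, let a_0,…,a_n ∈ ℂ, and for n-tuples w set Y(w) := Σ_{p=0}^{n} a_p σ_p(w). Define Λ(v) := (∏_{i=1}^{n} g(u,v_i)) · Y(v), regarded as a function of v_j with the other entries fixed. Then for each j = 1, …, n, (c / ∏_{i=1}^{n} g(u,v_i)) · ∂Λ(v)/∂v_j = g(u,v_j) · Y(v^{(j→u)}), where v^{(j→u)} is the n-tuple obtained from v by replacing v_j with u. -/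
theorem Y_update_affine {n : ℕ} (a : Fin (n + 1) → ℂ) (v : Fin n → ℂ) (j : Fin n) :
    ∃ α β : ℂ, ∀ t : ℂ, Y a (Function.update v j t) = α + β * t := by
  classical
  set E0 : ℕ → ℂ := fun p =>
    ∑ s ∈ (Finset.powersetCard p Finset.univ).filter (fun s => j ∉ s), ∏ i ∈ s, v i with hE0
  set E1 : ℕ → ℂ := fun p =>
    ∑ s ∈ (Finset.powersetCard p Finset.univ).filter (fun s => j ∈ s),
      ∏ i ∈ s.erase j, v i with hE1
  have hesym : ∀ (t : ℂ) (p : ℕ),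
      esym (Function.update v j t) p = E0 p + t * E1 p := by
    intro t p
    unfold esym
    rw [← Finset.sum_filter_add_sum_filter_not (Finset.powersetCard p Finset.univ)
      (fun s => j ∈ s)]
    have h1 : ∑ s ∈ (Finset.powersetCard p Finset.univ).filter (fun s => j ∈ s),
        ∏ i ∈ s, Function.update v j t i = t * E1 p := by
      rw [hE1, Finset.mul_sum]
      apply Finset.sum_congr rfl
      intro s hs
      have hjs : j ∈ s := (Finset.mem_filter.mp hs).2
      rw [← Finset.mul_prod_erase s _ hjs, Function.update_self]
      congr 1
      apply Finset.prod_congr rfl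
      intro i hi
      exact Function.update_of_ne (Finset.ne_of_mem_erase hi) _ _
    have h2 : ∑ s ∈ (Finset.powersetCard p Finset.univ).filter (fun s => ¬ j ∈ s),
        ∏ i ∈ s, Function.update v j t i = E0 p := by
      rw [hE0]
      apply Finset.sum_congr rfl
      intro s hs
      have hjs : j ∉ s := (Finset.mem_filter.mp hs).2
      apply Finset.prod_congr rfl
      intro i hi
      exact Function.update_of_ne (by rintro rfl; exact hjs hi) _ _
    rw [h1, h2]; ring
  refine ⟨∑ p : Fin (n + 1), a p * E0 (p : ℕ), ∑ p : Fin (n + 1), a p * E1 (p : ℕ), ?_⟩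
  intro t
  unfold Y
  simp only [hesym, mul_add]
  rw [Finset.sum_add_distrib]
  congr 1
  rw [Finset.sum_mul]
  apply Finset.sum_congr rfl
  intros; ring

/-- with `Λ(v) = (∏_i g(u, v_i)) Y(v)`,
`(c / ∏_i g(u, v_i)) ∂Λ(v)/∂v_j = g(u, v_j) Y(v^{(j → u)})`. -/
theorem partial_derivative_of_eigenvalue (c : ℂ) (hc : c ≠ 0) (n : ℕ)
    (u : ℂ) (v : Fin n → ℂ) (hu : ∀ i, u ≠ v i)
    (a : Fin (n + 1) → ℂ) (j : Fin n) :
    (c / ∏ i, g c u (v i)) *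
        deriv (fun t : ℂ =>
          (∏ i, g c u (Function.update v j t i)) * Y a (Function.update v j t)) (v j)
      = g c u (v j) * Y a (Function.update v j u) := by
  classical
  have hsub : ∀ i, u - v i ≠ 0 := fun i => sub_ne_zero.mpr (hu i)
  set C : ℂ := ∏ i ∈ Finset.univ.erase j, g c u (v i) with hCdef
  have hCne : C ≠ 0 := by
    rw [hCdef]
    apply Finset.prod_ne_zero_iff.mpr
    intro i _
    unfold g
    exact div_ne_zero hc (hsub i)
  have hP : ∀ t : ℂ, (∏ i, g c u (Function.update v j t i)) = c / (u - t) * C := by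
    intro t
    rw [← Finset.mul_prod_erase Finset.univ _ (Finset.mem_univ j)]
    congr 1
    · rw [Function.update_self]; rfl
    · apply Finset.prod_congr rfl
      intro i hi
      rw [Function.update_of_ne (Finset.ne_of_mem_erase hi)]
  obtain ⟨α, β, hA⟩ := Y_update_affine a v j
  have hfun : (fun t : ℂ =>
      (∏ i, g c u (Function.update v j t i)) * Y a (Function.update v j t))
      = fun t : ℂ => c / (u - t) * C * (α + β * t) := by
    funext t
    rw [hP t, hA t]
  have hprod : (∏ i, g c u (v i)) = c / (u - v j) * C := by
    have := hP (v j)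
    simpa [Function.update_eq_self] using this
  have h1 : HasDerivAt (fun t : ℂ => u - t) (-1) (v j) := by
    simpa using (hasDerivAt_id (v j)).const_sub u
  have h2 : HasDerivAt (fun t : ℂ => c / (u - t)) (c / (u - v j) ^ 2) (v j) := by
    have h := (hasDerivAt_const (v j) c).div h1 (hsub j)
    rw [show c / (u - v j) ^ 2 = (0 * (u - v j) - c * -1) / (u - v j) ^ 2 by ring]
    exact h
  have h3 : HasDerivAt (fun t : ℂ => α + β * t) β (v j) := by
    simpa using ((hasDerivAt_id (v j)).const_mul β).const_add α
  have hder : HasDerivAt (fun t : ℂ => c / (u - t) * C * (α + β * t))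
      (c / (u - v j) ^ 2 * C * (α + β * v j) + c / (u - v j) * C * β) (v j) := by
    have h := (h2.mul_const C).mul h3
    exact h
  rw [hfun, hder.deriv, hprod, hA u]
  unfold g
  have hd : u - v j ≠ 0 := hsub j
  obtain ⟨d, hdd, hdne⟩ : ∃ d : ℂ, u = d + v j ∧ d ≠ 0 :=
    ⟨u - v j, by ring, hd⟩
  subst hdd
  have h0 : d + v j - v j = d := by ring
  rw [h0]
  field_simp
  ring
end

section
/- Let n ≥ 0, let u_1,…,u_{n+1} ∈ ℂ be pairwise distinct, let w_1,…,w_{n+1} ∈ ℂ be pairwise distinct, and assume u_k ≠ w_m for all k,m. Define the (n+1)×(n+1) matrix W by W_{jk} := g(u_k,w_j) · (∏_{i≠k} g(u_k,u_i)) / (∏_{m=1}^{n+1} g(u_k,w_m)). Then det W = Δ(u)/Δ(w), where Δ(u) := ∏_{j>k} g(u_j,u_k) and Δ(w) := ∏_{j>k} g(w_j,w_k). -/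
/-- `Δ(u) = ∏_{j > k} g(u_j, u_k)`. -/
noncomputable def Del (c : ℂ) {m : ℕ} (u : Fin m → ℂ) : ℂ :=
  ∏ p ∈ Finset.univ.filter (fun p : Fin m × Fin m => p.2 < p.1), g c (u p.1) (u p.2)

open Finset Polynomial Matrix

/-- Reindexing the strict-lower-triangle product. -/
lemma pairProd {m : ℕ} (F : Fin m × Fin m → ℂ) :
    ∏ p ∈ Finset.univ.filter (fun p : Fin m × Fin m => p.2 < p.1), F p
      = ∏ j : Fin m, ∏ i ∈ Finset.Iio j, F (j, i) := by
  rw [Finset.prod_sigma']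
  refine Finset.prod_bij (fun (p : Fin m × Fin m) _ => (⟨p.1, p.2⟩ : Σ _ : Fin m, Fin m)) ?_ ?_ ?_ ?_
  · intro p hp
    simp only [Finset.mem_filter] at hp
    simp [Finset.mem_sigma, Finset.mem_Iio, hp.2]
  · intro a _ b _ h
    injection h with h1 h2
    exact Prod.ext h1 h2
  · intro b hb
    simp only [Finset.mem_sigma, Finset.mem_Iio] at hb
    exact ⟨(b.1, b.2), by simp [hb.2], rfl⟩
  · intro a _; rfl

/-- Swap the roles of the two indices in a triangular double product. -/
lemma swapProd {m : ℕ} (F : Fin m → Fin m → ℂ) :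
    ∏ j : Fin m, ∏ i ∈ Finset.Ioi j, F j i = ∏ j : Fin m, ∏ i ∈ Finset.Iio j, F i j := by
  refine Finset.prod_comm' ?_
  intro x y; simp [Finset.mem_Ioi, Finset.mem_Iio]

lemma erase_eq_Iio_union_Ioi {m : ℕ} (j : Fin m) :
    Finset.univ.erase j = Finset.Iio j ∪ Finset.Ioi j := by
  ext i
  simp only [Finset.mem_erase, Finset.mem_univ, and_true, Finset.mem_union, Finset.mem_Iio,
    Finset.mem_Ioi]
  exact ne_iff_lt_or_gt

lemma prod_erase_split {m : ℕ} (j : Fin m) (F : Fin m → ℂ) :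
    ∏ i ∈ Finset.univ.erase j, F i
      = (∏ i ∈ Finset.Iio j, F i) * ∏ i ∈ Finset.Ioi j, F i := by
  rw [erase_eq_Iio_union_Ioi, Finset.prod_union]
  intro s h1 h2 i hi
  have := h1 hi; have := h2 hi
  simp only [Finset.mem_Iio] at *
  exact absurd ((Finset.mem_Ioi).1 (h2 hi)) (not_lt.2 (le_of_lt ((Finset.mem_Iio).1 (h1 hi))))

/-- `∏_j ∏_{i≠j} (x j - x i) = s * V^2` where `s` is a sign and `V` the Vandermonde product. -/
lemma prod_offdiag_eq {m : ℕ} (x : Fin m → ℂ) :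
    ∏ j, ∏ i ∈ Finset.univ.erase j, (x j - x i)
      = (∏ j : Fin m, (-1 : ℂ) ^ (Finset.Iio j).card) *
          (∏ j, ∏ i ∈ Finset.Iio j, (x j - x i)) ^ 2 := by
  have h1 : ∀ j : Fin m, ∏ i ∈ Finset.univ.erase j, (x j - x i)
      = (∏ i ∈ Finset.Iio j, (x j - x i)) * ∏ i ∈ Finset.Ioi j, (x j - x i) :=
    fun j => prod_erase_split j _
  calc ∏ j, ∏ i ∈ Finset.univ.erase j, (x j - x i)
      = (∏ j, ∏ i ∈ Finset.Iio j, (x j - x i)) * ∏ j, ∏ i ∈ Finset.Ioi j, (x j - x i) := by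
        rw [← Finset.prod_mul_distrib]; exact Finset.prod_congr rfl fun j _ => h1 j
    _ = (∏ j, ∏ i ∈ Finset.Iio j, (x j - x i)) * ∏ j, ∏ i ∈ Finset.Iio j, (x i - x j) := by
        rw [swapProd]
    _ = _ := by
        have : ∀ j : Fin m, ∏ i ∈ Finset.Iio j, (x i - x j)
            = (-1 : ℂ) ^ (Finset.Iio j).card * ∏ i ∈ Finset.Iio j, (x j - x i) := by
          intro j
          rw [← Finset.prod_const, ← Finset.prod_mul_distrib]
          exact Finset.prod_congr rfl fun i _ => by ring
        rw [Finset.prod_congr rfl fun j _ => this j, Finset.prod_mul_distrib]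
        ring

/-- the determinant of the matrix
`W_{jk} = g(u_k, w_j) (∏_{i≠k} g(u_k,u_i)) / (∏_m g(u_k,w_m))` equals `Δ(u)/Δ(w)`. -/
theorem det_W (c : ℂ) (hc : c ≠ 0) (n : ℕ)
    (u : Fin (n + 1) → ℂ) (hu : Function.Injective u)
    (w : Fin (n + 1) → ℂ) (hw : Function.Injective w)
    (huw : ∀ k m : Fin (n + 1), u k ≠ w m) :
    (Matrix.of fun j k : Fin (n + 1) =>
        g c (u k) (w j) * (∏ i ∈ Finset.univ.erase k, g c (u k) (u i)) /
          (∏ m, g c (u k) (w m))).det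
      = Del c u / Del c w := by
  classical
  -- abbreviations
  set Vu : ℂ := ∏ j, ∏ i ∈ Finset.Iio j, (u j - u i) with hVu
  set Vw : ℂ := ∏ j, ∏ i ∈ Finset.Iio j, (w j - w i) with hVw
  set s : ℂ := ∏ j : Fin (n+1), (-1 : ℂ) ^ (Finset.Iio j).card with hs
  have hVu0 : Vu ≠ 0 := by
    refine Finset.prod_ne_zero_iff.2 fun j _ => Finset.prod_ne_zero_iff.2 fun i hi => ?_
    exact sub_ne_zero.2 fun h => absurd (hu h) (ne_of_gt (Finset.mem_Iio.1 hi))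
  have hVw0 : Vw ≠ 0 := by
    refine Finset.prod_ne_zero_iff.2 fun j _ => Finset.prod_ne_zero_iff.2 fun i hi => ?_
    exact sub_ne_zero.2 fun h => absurd (hw h) (ne_of_gt (Finset.mem_Iio.1 hi))
  have hs0 : s ≠ 0 := by
    refine Finset.prod_ne_zero_iff.2 fun j _ => pow_ne_zero _ (by norm_num)
  -- RHS computation
  have hRHS : Del c u / Del c w = Vw / Vu := by
    have hD : ∀ x : Fin (n+1) → ℂ, (∀ i j : Fin (n+1), i < j → x j - x i ≠ 0) →
        Del c x = (∏ j : Fin (n+1), ∏ i ∈ Finset.Iio j, c) /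
          ∏ j, ∏ i ∈ Finset.Iio j, (x j - x i) := by
      intro x hx
      rw [Del, pairProd fun p => g c (x p.1) (x p.2)]
      rw [← Finset.prod_div_distrib]
      refine Finset.prod_congr rfl fun j _ => ?_
      rw [← Finset.prod_div_distrib]
      rfl
    rw [hD u (fun i j hij => sub_ne_zero.2 fun h => absurd (hu h) (ne_of_gt hij)),
        hD w (fun i j hij => sub_ne_zero.2 fun h => absurd (hw h) (ne_of_gt hij))]
    have hC : (∏ j : Fin (n+1), ∏ i ∈ Finset.Iio j, c) ≠ 0 :=
      Finset.prod_ne_zero_iff.2 fun j _ => Finset.prod_ne_zero_iff.2 fun i _ => hc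
    rw [div_div_div_comm, div_self hC, ← hVu, ← hVw, one_div, inv_div]
  rw [hRHS]
  -- the polynomials and the coefficient matrix
  set P : Fin (n+1) → Polynomial ℂ :=
    fun j => ∏ m ∈ Finset.univ.erase j, (Polynomial.X - Polynomial.C (w m)) with hP
  have hPdeg : ∀ j, (P j).natDegree < n + 1 := by
    intro j
    calc (P j).natDegree ≤ ∑ m ∈ Finset.univ.erase j,
          (Polynomial.X - Polynomial.C (w m)).natDegree := Polynomial.natDegree_prod_le _ _
      _ = ∑ m ∈ Finset.univ.erase j, 1 := by
          exact Finset.sum_congr rfl fun m _ => Polynomial.natDegree_X_sub_C _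
      _ = n := by simp [Finset.card_erase_of_mem]
      _ < n + 1 := Nat.lt_succ_self n
  have hPeval : ∀ (j : Fin (n+1)) (x : ℂ),
      (P j).eval x = ∏ m ∈ Finset.univ.erase j, (x - w m) := by
    intro j x; simp [hP, Polynomial.eval_prod]
  set A : Matrix (Fin (n+1)) (Fin (n+1)) ℂ := Matrix.of fun j t => (P j).coeff t with hA
  have hAV : ∀ (x : Fin (n+1) → ℂ) (j k : Fin (n+1)),
      (A * (Matrix.vandermonde x)ᵀ) j k = ∏ m ∈ Finset.univ.erase j, (x k - w m) := by
    intro x j k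
    rw [Matrix.mul_apply]
    have : ∀ t : Fin (n+1), A j t * (Matrix.vandermonde x)ᵀ t k
        = (P j).coeff t * x k ^ (t : ℕ) := by
      intro t; simp [hA, Matrix.vandermonde, Matrix.transpose_apply]
    rw [Finset.prod_congr rfl (fun _ _ => rfl)]  -- no-op
    rw [Finset.sum_congr rfl fun t _ => this t]
    rw [Fin.sum_univ_eq_sum_range (fun t => (P j).coeff t * x k ^ t)]
    rw [← Polynomial.eval_eq_sum_range' (hPdeg j)]
    exact hPeval j (x k)
  -- key factorization
  set d : Fin (n+1) → ℂ := fun k => (∏ i ∈ Finset.univ.erase k, (u k - u i))⁻¹ with hd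
  have hW : (Matrix.of fun j k : Fin (n + 1) =>
        g c (u k) (w j) * (∏ i ∈ Finset.univ.erase k, g c (u k) (u i)) /
          (∏ m, g c (u k) (w m)))
      = (A * (Matrix.vandermonde u)ᵀ) * Matrix.diagonal d := by
    ext j k
    rw [Matrix.mul_diagonal, hAV u j k]
    simp only [Matrix.of_apply, hd]
    have huw' : ∀ m, u k - w m ≠ 0 := fun m => sub_ne_zero.2 (huw k m)
    have huu : ∀ i, i ≠ k → u k - u i ≠ 0 :=
      fun i hi => sub_ne_zero.2 fun h => hi (hu h).symm
    have hQ : (∏ i ∈ Finset.univ.erase k, (u k - u i)) ≠ 0 :=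
      Finset.prod_ne_zero_iff.2 fun i hi => huu i (Finset.mem_erase.1 hi).1
    have hRw : (∏ m ∈ Finset.univ.erase j, (u k - w m)) ≠ 0 :=
      Finset.prod_ne_zero_iff.2 fun m _ => huw' m
    -- rewrite g's
    simp only [g]
    rw [Finset.prod_div_distrib, Finset.prod_div_distrib, Finset.prod_const, Finset.prod_const,
        ← Finset.prod_erase_mul Finset.univ (fun m => u k - w m) (Finset.mem_univ j)]
    simp only [Finset.card_erase_of_mem (Finset.mem_univ _), Finset.card_univ, Fintype.card_fin,
        Nat.add_sub_cancel]
    have hj := huw' j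
    rw [pow_succ]
    field_simp
  rw [hW]
  -- determinant of A via the w-Vandermonde
  have hAW : A * (Matrix.vandermonde w)ᵀ
      = Matrix.diagonal (fun j => ∏ i ∈ Finset.univ.erase j, (w j - w i)) := by
    ext j m
    rw [hAV w j m]
    rcases eq_or_ne j m with rfl | hjm
    · simp
    · rw [Matrix.diagonal_apply_ne _ hjm]
      exact Finset.prod_eq_zero (Finset.mem_erase.2 ⟨hjm.symm, Finset.mem_univ m⟩) (sub_self _)
  have hdetvand : ∀ x : Fin (n+1) → ℂ,
      (Matrix.vandermonde x).det = ∏ j, ∏ i ∈ Finset.Iio j, (x j - x i) := by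
    intro x
    rw [Matrix.det_vandermonde]
    exact swapProd fun j i => x i - x j
  have hdetA : A.det * Vw = ∏ j, ∏ i ∈ Finset.univ.erase j, (w j - w i) := by
    have := congrArg Matrix.det hAW
    rw [Matrix.det_mul, Matrix.det_transpose, hdetvand w, Matrix.det_diagonal] at this
    exact this
  -- final computation
  rw [Matrix.det_mul, Matrix.det_mul, Matrix.det_transpose, hdetvand u,
      Matrix.det_diagonal]
  have hdprod : (∏ k, d k) = (∏ k, ∏ i ∈ Finset.univ.erase k, (u k - u i))⁻¹ := by
    rw [hd, ← Finset.prod_inv_distrib]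
  have hPw : ∏ j, ∏ i ∈ Finset.univ.erase j, (w j - w i) = s * Vw ^ 2 := by
    rw [prod_offdiag_eq w, ← hs, ← hVw]
  have hdetA' : A.det = s * Vw ^ 2 / Vw := by
    field_simp at hdetA ⊢
    rw [hPw] at hdetA
    exact mul_right_cancel₀ hVw0 (by rw [hdetA]; ring)
  rw [hdprod, prod_offdiag_eq u, ← hs, ← hVu, hdetA']
  field_simp
end

section
/- Let w_1,…,w_{n+1} ∈ ℂ with w_m ≠ u_k for all m,k, and define the (n+1)×(n+1) matrix W by W_{jℓ} := g(u_ℓ,w_j) · (∏_{i≠ℓ} g(u_ℓ,u_i)) / (∏_{m=1}^{n+1} g(u_ℓ,w_m)). Then the matrix product W·M has entries (W·M)_{jk} = (∏_{i≠k} g(u_k,u_i)) · [ Y_k(ŵ_j) − (g(u_k,w_j) / ∏_{m=1}^{n+1} g(u_k,w_m)) · (∏_{i=1}^{n} g(u_k,v_i)) · Y_k(v) ], where ŵ_j denotes the n-tuple (w_1,…,w_{n+1}) with w_j omitted. -/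
lemma esym_eq {m : ℕ} (w : Fin m → ℂ) (p : ℕ) :
    esym w p = (Finset.univ.val.map w).esymm p := by
  rw [Finset.esymm_map_val]; rfl

lemma coeff_prod_X_sub_C_s7 {N : ℕ} (z : Fin N → ℂ) {p : ℕ} (hp : p ≤ N) :
    (∏ m : Fin N, (Polynomial.X - Polynomial.C (z m))).coeff (N - p)
      = (-1) ^ p * esym z p := by
  have h1 : (∏ m : Fin N, (Polynomial.X - Polynomial.C (z m)))
      = ((Finset.univ.val.map z).map fun t => Polynomial.X - Polynomial.C t).prod := by
    rw [Multiset.map_map]; rfl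
  have hcard : Multiset.card (Finset.univ.val.map z) = N := by simp
  rw [h1, Multiset.prod_X_sub_C_coeff _ (by rw [hcard]; omega), hcard,
    Nat.sub_sub_self hp, esym_eq]

lemma erase_prod_eq {M : Type*} [CommMonoid M] {n : ℕ} (f : Fin (n+1) → M) (ℓ : Fin (n+1)) :
    ∏ i ∈ Finset.univ.erase ℓ, f i = ∏ m : Fin n, f (ℓ.succAbove m) := by
  rw [← Finset.compl_singleton, ← Fin.image_succAbove_univ,
    Finset.prod_image (fun a _ b _ h => Fin.succAbove_right_injective h)]

lemma basis_coeff {n : ℕ} (u : Fin (n+1) → ℂ) (ℓ : Fin (n+1)) {p : ℕ} (hp : p ≤ n) :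
    (Lagrange.basis Finset.univ u ℓ).coeff (n - p)
      = (∏ i ∈ Finset.univ.erase ℓ, (u ℓ - u i))⁻¹ * ((-1) ^ p * esym (u ∘ ℓ.succAbove) p) := by
  have hb : Lagrange.basis Finset.univ u ℓ
      = Polynomial.C (∏ i ∈ Finset.univ.erase ℓ, (u ℓ - u i))⁻¹ *
        ∏ i ∈ Finset.univ.erase ℓ, (Polynomial.X - Polynomial.C (u i)) := by
    rw [Lagrange.basis]
    simp_rw [Lagrange.basisDivisor]
    rw [Finset.prod_mul_distrib, ← Finset.prod_inv_distrib, map_prod]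
  rw [hb, Polynomial.coeff_C_mul,
    erase_prod_eq (fun i => Polynomial.X - Polynomial.C (u i)) ℓ]
  rw [show (∏ m : Fin n, (Polynomial.X - Polynomial.C (u (ℓ.succAbove m))))
      = ∏ m : Fin n, (Polynomial.X - Polynomial.C ((u ∘ ℓ.succAbove) m)) from rfl,
    coeff_prod_X_sub_C_s7 _ hp]

lemma key_sum {n : ℕ} (u : Fin (n+1) → ℂ) (hu : Function.Injective u)
    (z : Fin n → ℂ) {p : ℕ} (hp : p ≤ n) :
    ∑ ℓ : Fin (n+1), (∏ m : Fin n, (u ℓ - z m)) *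
        (∏ i ∈ Finset.univ.erase ℓ, (u ℓ - u i))⁻¹ * esym (u ∘ ℓ.succAbove) p
      = esym z p := by
  set f : Polynomial ℂ := ∏ m : Fin n, (Polynomial.X - Polynomial.C (z m)) with hf
  have hdeg : f.degree < (Finset.univ : Finset (Fin (n+1))).card := by
    have : f.degree ≤ n := by
      apply le_trans (Polynomial.degree_prod_le _ _)
      simp [Polynomial.degree_X_sub_C]
    refine lt_of_le_of_lt this ?_
    simp
    exact_mod_cast Nat.lt_succ_self n
  have hinterp := Lagrange.eq_interpolate (s := Finset.univ) (v := u) hu.injOn hdeg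
  have hcoeff := congrArg (fun q : Polynomial ℂ => q.coeff (n - p)) hinterp
  simp only [Lagrange.interpolate_apply, Polynomial.finset_sum_coeff,
    Polynomial.coeff_C_mul] at hcoeff
  rw [coeff_prod_X_sub_C_s7 _ hp] at hcoeff
  have heval : ∀ ℓ, Polynomial.eval (u ℓ) f = ∏ m : Fin n, (u ℓ - z m) := by
    intro ℓ; simp [hf, Polynomial.eval_prod]
  apply mul_left_cancel₀ (a := ((-1 : ℂ)) ^ p) (by simp)
  rw [hcoeff, Finset.mul_sum]
  refine Finset.sum_congr rfl fun ℓ _ => ?_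
  rw [basis_coeff u ℓ hp, heval]
  ring

lemma prod_g_erase {c : ℂ} {n : ℕ} (u : Fin (n+1) → ℂ) (ℓ : Fin (n+1)) :
    ∏ i ∈ Finset.univ.erase ℓ, g c (u ℓ) (u i)
      = c ^ n * (∏ i ∈ Finset.univ.erase ℓ, (u ℓ - u i))⁻¹ := by
  simp only [g, div_eq_mul_inv]
  rw [Finset.prod_mul_distrib, Finset.prod_const, Finset.prod_inv_distrib,
    Finset.card_erase_of_mem (Finset.mem_univ ℓ), Finset.card_univ, Fintype.card_fin]
  rfl

lemma W_simp (c : ℂ) (hc : c ≠ 0) {n : ℕ} (u : Fin (n+1) → ℂ) (hu : Function.Injective u)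
    (w : Fin (n+1) → ℂ) (hwu : ∀ m k : Fin (n+1), w m ≠ u k) (j ℓ : Fin (n+1)) :
    g c (u ℓ) (w j) * (∏ i ∈ Finset.univ.erase ℓ, g c (u ℓ) (u i)) /
        (∏ m, g c (u ℓ) (w m))
      = (∏ m : Fin n, (u ℓ - w (j.succAbove m))) *
          (∏ i ∈ Finset.univ.erase ℓ, (u ℓ - u i))⁻¹ := by
  have hne : ∀ m, u ℓ - w m ≠ 0 := fun m => sub_ne_zero.mpr (Ne.symm (hwu m ℓ))
  have hA : (∏ i ∈ Finset.univ.erase ℓ, (u ℓ - u i)) ≠ 0 := by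
    refine Finset.prod_ne_zero_iff.mpr fun i hi => sub_ne_zero.mpr ?_
    exact fun h => (Finset.mem_erase.mp hi).1 (hu h.symm)
  have h2 : ∏ m, g c (u ℓ) (w m) = c ^ (n+1) * (∏ m, (u ℓ - w m))⁻¹ := by
    simp only [g, div_eq_mul_inv]
    rw [Finset.prod_mul_distrib, Finset.prod_const, Finset.prod_inv_distrib,
      Finset.card_univ, Fintype.card_fin]
  have h3 : ∏ m, (u ℓ - w m)
      = (u ℓ - w j) * ∏ m : Fin n, (u ℓ - w (j.succAbove m)) :=
    Fin.prod_univ_succAbove (fun m => u ℓ - w m) j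
  have hP : (∏ m : Fin n, (u ℓ - w (j.succAbove m))) ≠ 0 :=
    Finset.prod_ne_zero_iff.mpr fun m _ => hne (j.succAbove m)
  have hx := hne j
  rw [prod_g_erase, h2, h3, g]
  rw [mul_inv, div_eq_mul_inv, div_eq_mul_inv, mul_inv, mul_inv, inv_inv, inv_inv, pow_succ]
  field_simp

/-- entries of the product `W · M`. -/
theorem W_mul_M_entries (c : ℂ) (hc : c ≠ 0) (n : ℕ) (hn : 1 ≤ n)
    (u : Fin (n + 1) → ℂ) (hu : Function.Injective u)
    (v : Fin n → ℂ) (huv : ∀ (j : Fin (n + 1)) (i : Fin n), u j ≠ v i)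
    (a : Fin (n + 1) → Fin (n + 1) → ℂ)
    (w : Fin (n + 1) → ℂ) (hwu : ∀ m k : Fin (n + 1), w m ≠ u k)
    (W : Matrix (Fin (n + 1)) (Fin (n + 1)) ℂ)
    (hW : W = Matrix.of fun j ℓ =>
      g c (u ℓ) (w j) * (∏ i ∈ Finset.univ.erase ℓ, g c (u ℓ) (u i)) /
        (∏ m, g c (u ℓ) (w m))) :
    ∀ j k : Fin (n + 1),
      (W * Mmat c u v a) j k =
        (∏ i ∈ Finset.univ.erase k, g c (u k) (u i)) *
          (Y (fun p => a p k) (w ∘ j.succAbove)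
            - (g c (u k) (w j) / ∏ m, g c (u k) (w m)) *
                ((∏ i, g c (u k) (v i)) * Y (fun p => a p k) v)) := by
  subst hW
  intro j k
  rw [Matrix.mul_apply]
  simp only [Mmat, Matrix.of_apply, mul_sub]
  rw [Finset.sum_sub_distrib]
  have hdelta : ∑ ℓ : Fin (n+1),
      (g c (u ℓ) (w j) * ∏ i ∈ Finset.univ.erase ℓ, g c (u ℓ) (u i)) /
          (∏ m, g c (u ℓ) (w m)) *
        ((if ℓ = k then 1 else 0) * ((∏ i, g c (u ℓ) (v i)) * Y (fun p => a p ℓ) v))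
      = (g c (u k) (w j) * ∏ i ∈ Finset.univ.erase k, g c (u k) (u i)) /
          (∏ m, g c (u k) (w m)) *
        ((∏ i, g c (u k) (v i)) * Y (fun p => a p k) v) := by
    rw [Finset.sum_eq_single k]
    · simp
    · intro b _ hb; simp [hb]
    · simp
  rw [hdelta]
  have hmain : ∑ ℓ : Fin (n+1),
      (g c (u ℓ) (w j) * ∏ i ∈ Finset.univ.erase ℓ, g c (u ℓ) (u i)) /
          (∏ m, g c (u ℓ) (w m)) *
        ((∏ i ∈ Finset.univ.erase k, g c (u k) (u i)) *
          Y (fun p => a p k) (u ∘ ℓ.succAbove))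
      = (∏ i ∈ Finset.univ.erase k, g c (u k) (u i)) *
          Y (fun p => a p k) (w ∘ j.succAbove) := by
    have hWent : ∀ ℓ : Fin (n+1), (g c (u ℓ) (w j) * ∏ i ∈ Finset.univ.erase ℓ, g c (u ℓ) (u i)) /
          (∏ m, g c (u ℓ) (w m))
        = (∏ m : Fin n, (u ℓ - w (j.succAbove m))) *
            (∏ i ∈ Finset.univ.erase ℓ, (u ℓ - u i))⁻¹ :=
      fun ℓ => W_simp c hc u hu w hwu j ℓ
    simp only [hWent]
    simp only [Y, Finset.mul_sum]
    rw [Finset.sum_comm]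
    refine Finset.sum_congr rfl fun p _ => ?_
    have hp : (p : ℕ) ≤ n := Nat.lt_succ_iff.mp p.isLt
    have hk := key_sum u hu (w ∘ j.succAbove) hp
    calc ∑ ℓ : Fin (n+1),
        (∏ m : Fin n, (u ℓ - w (j.succAbove m))) *
          (∏ i ∈ Finset.univ.erase ℓ, (u ℓ - u i))⁻¹ *
          ((∏ i ∈ Finset.univ.erase k, g c (u k) (u i)) *
            (a p k * esym (u ∘ ℓ.succAbove) (p : ℕ)))
        = ((∏ i ∈ Finset.univ.erase k, g c (u k) (u i)) * a p k) *
          ∑ ℓ : Fin (n+1), (∏ m : Fin n, (u ℓ - (w ∘ j.succAbove) m)) *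
            (∏ i ∈ Finset.univ.erase ℓ, (u ℓ - u i))⁻¹ *
            esym (u ∘ ℓ.succAbove) (p : ℕ) := by
          rw [Finset.mul_sum]
          refine Finset.sum_congr rfl fun ℓ _ => ?_
          simp only [Function.comp]; ring
      _ = (∏ i ∈ Finset.univ.erase k, g c (u k) (u i)) *
            (a p k * esym (w ∘ j.succAbove) (p : ℕ)) := by rw [hk]; ring
  rw [hmain]
  ring
end

section
/- Let n ≥ 0, let u_1,…,u_{n+1} ∈ ℂ be pairwise distinct, let w_1,…,w_{n+1} ∈ ℂ with u_ℓ ≠ w_m for all ℓ,m, and let t ∈ ℂ with t ≠ −u_μ for all μ. Then for each j = 1, …, n+1: Σ_{ℓ=1}^{n+1} [ g(u_ℓ,w_j) / (t + u_ℓ) ] · (∏_{i≠ℓ} g(u_ℓ,u_i)) / (∏_{m=1}^{n+1} g(u_ℓ,w_m)) = (∏_{μ≠j} (t + w_μ)) / (∏_{μ=1}^{n+1} (t + u_μ)). -/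
open Polynomial Finset

private lemma prod_neg' {ι : Type*} (s : Finset ι) (f : ι → ℂ) :
    ∏ i ∈ s, (-(f i)) = (-1) ^ s.card * ∏ i ∈ s, f i := by
  rw [← Finset.prod_const (-1 : ℂ), ← Finset.prod_mul_distrib]
  exact Finset.prod_congr rfl fun i _ => by ring

private lemma lagrange_sum (n : ℕ) (u : Fin (n+1) → ℂ) (hu : Function.Injective u)
    (P : ℂ[X]) (hP : P.degree < (n+1 : ℕ)) (x : ℂ) (hx : ∀ μ, x ≠ u μ) :
    ∑ ℓ : Fin (n+1), P.eval (u ℓ) /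
        ((x - u ℓ) * ∏ i ∈ Finset.univ.erase ℓ, (u ℓ - u i))
      = P.eval x / ∏ μ, (x - u μ) := by
  have hcard : ((Finset.univ : Finset (Fin (n+1))).card : WithBot ℕ) = (n+1 : ℕ) := by
    simp
  have h := Lagrange.eq_interpolate (v := u) (s := Finset.univ)
    (hu.injOn) (by rw [hcard]; exact hP)
  have hev := congrArg (Polynomial.eval x) h
  rw [Lagrange.interpolate_apply] at hev
  simp only [Polynomial.eval_finset_sum, Polynomial.eval_mul, Polynomial.eval_C,
    Lagrange.basis, Polynomial.eval_prod, Lagrange.basisDivisor,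
    Polynomial.eval_mul, Polynomial.eval_C, Polynomial.eval_sub, Polynomial.eval_X] at hev
  rw [hev, Finset.sum_div]
  refine Finset.sum_congr rfl fun ℓ _ => ?_
  have hxl : x - u ℓ ≠ 0 := sub_ne_zero.mpr (hx ℓ)
  have hprodx : ∏ μ, (x - u μ) = (x - u ℓ) * ∏ i ∈ Finset.univ.erase ℓ, (x - u i) :=
    (Finset.mul_prod_erase _ _ (Finset.mem_univ ℓ)).symm
  have hne : ∀ i ∈ Finset.univ.erase ℓ, u ℓ - u i ≠ 0 := fun i hi =>
    sub_ne_zero.mpr (fun h => (Finset.mem_erase.mp hi).1 (hu h).symm)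
  rw [Finset.prod_mul_distrib, hprodx]
  rw [div_eq_div_iff (by
      exact mul_ne_zero hxl (Finset.prod_ne_zero_iff.mpr hne))
    (by
      refine mul_ne_zero hxl (Finset.prod_ne_zero_iff.mpr ?_)
      intro i hi
      exact sub_ne_zero.mpr (hx i))]
  have : (∏ i ∈ Finset.univ.erase ℓ, (u ℓ - u i)⁻¹) * ∏ i ∈ Finset.univ.erase ℓ, (u ℓ - u i) = 1 := by
    rw [← Finset.prod_mul_distrib]
    exact Finset.prod_eq_one fun i hi => inv_mul_cancel₀ (hne i hi)
  linear_combination (-(Polynomial.eval (u ℓ) P * (x - u ℓ) *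
    ∏ i ∈ Finset.univ.erase ℓ, (x - u i))) * this

/-- the partial-fraction summation identity
`∑_ℓ [g(u_ℓ,w_j)/(t+u_ℓ)] (∏_{i≠ℓ} g(u_ℓ,u_i)) / (∏_m g(u_ℓ,w_m))
  = (∏_{μ≠j} (t+w_μ)) / (∏_μ (t+u_μ))`. -/
theorem partial_fraction_sum (c : ℂ) (hc : c ≠ 0) (n : ℕ)
    (u : Fin (n + 1) → ℂ) (hu : Function.Injective u)
    (w : Fin (n + 1) → ℂ) (huw : ∀ ℓ m : Fin (n + 1), u ℓ ≠ w m)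
    (t : ℂ) (ht : ∀ μ : Fin (n + 1), t ≠ -u μ) (j : Fin (n + 1)) :
    ∑ ℓ : Fin (n + 1),
        (g c (u ℓ) (w j) / (t + u ℓ)) *
          ((∏ i ∈ Finset.univ.erase ℓ, g c (u ℓ) (u i)) / (∏ m, g c (u ℓ) (w m)))
      = (∏ μ ∈ Finset.univ.erase j, (t + w μ)) / (∏ μ, (t + u μ)) := by
  classical
  set P : ℂ[X] := ∏ m ∈ Finset.univ.erase j, (X - C (w m)) with hP
  have hcardj : (Finset.univ.erase j).card = n := by
    rw [Finset.card_erase_of_mem (Finset.mem_univ j)]; simp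
  have hdeg : P.degree < (n+1 : ℕ) := by
    have : P.degree = (n : ℕ) := by
      rw [hP, Polynomial.degree_prod]
      simp [Polynomial.degree_X_sub_C, hcardj]
    rw [this]
    exact_mod_cast Nat.lt_succ_self n
  have hx : ∀ μ, (-t : ℂ) ≠ u μ := by
    intro μ h
    exact ht μ (by rw [← h]; ring)
  have htl : ∀ ℓ, t + u ℓ ≠ 0 := by
    intro ℓ h
    exact ht ℓ (by linear_combination h)
  have hud : ∀ ℓ, ∀ i ∈ Finset.univ.erase ℓ, u ℓ - u i ≠ 0 := fun ℓ i hi =>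
    sub_ne_zero.mpr (fun h => (Finset.mem_erase.mp hi).1 (hu h).symm)
  have hwd : ∀ ℓ m, u ℓ - w m ≠ 0 := fun ℓ m => sub_ne_zero.mpr (huw ℓ m)
  have hevalP : ∀ y : ℂ, P.eval y = ∏ m ∈ Finset.univ.erase j, (y - w m) := by
    intro y; simp [hP, Polynomial.eval_prod]
  have key := lagrange_sum n u hu P hdeg (-t) hx
  -- termwise simplification of the LHS
  have hterm : ∀ ℓ : Fin (n+1),
      (g c (u ℓ) (w j) / (t + u ℓ)) *
          ((∏ i ∈ Finset.univ.erase ℓ, g c (u ℓ) (u i)) / (∏ m, g c (u ℓ) (w m)))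
        = -(P.eval (u ℓ) / ((-t - u ℓ) * ∏ i ∈ Finset.univ.erase ℓ, (u ℓ - u i))) := by
    intro ℓ
    have e1 : -t - u ℓ = -(t + u ℓ) := by ring
    rw [hevalP, e1, neg_mul, div_neg, neg_neg]
    simp only [g, Finset.prod_div_distrib, Finset.prod_const]
    rw [Finset.card_erase_of_mem (Finset.mem_univ ℓ), Finset.card_univ, Fintype.card_fin]
    simp only [Nat.add_sub_cancel]
    have hsplit : ∏ m, (u ℓ - w m)
        = (u ℓ - w j) * ∏ m ∈ Finset.univ.erase j, (u ℓ - w m) :=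
      (Finset.mul_prod_erase _ _ (Finset.mem_univ j)).symm
    have h1 : ∏ i ∈ Finset.univ.erase ℓ, (u ℓ - u i) ≠ 0 :=
      Finset.prod_ne_zero_iff.mpr (hud ℓ)
    have h2 : ∏ m, (u ℓ - w m) ≠ 0 :=
      Finset.prod_ne_zero_iff.mpr (fun m _ => hwd ℓ m)
    have h3 : ∏ m ∈ Finset.univ.erase j, (u ℓ - w m) ≠ 0 :=
      Finset.prod_ne_zero_iff.mpr (fun m _ => hwd ℓ m)
    rw [hsplit]
    have step1 : (c ^ n / ∏ i ∈ Finset.univ.erase ℓ, (u ℓ - u i)) /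
        (c ^ (n+1) / ((u ℓ - w j) * ∏ m ∈ Finset.univ.erase j, (u ℓ - w m)))
        = ((u ℓ - w j) * ∏ m ∈ Finset.univ.erase j, (u ℓ - w m)) /
          (c * ∏ i ∈ Finset.univ.erase ℓ, (u ℓ - u i)) := by
      rw [div_div_div_comm]
      rw [pow_succ]
      field_simp
    rw [step1]
    rw [div_div, div_mul_div_comm]
    rw [div_eq_div_iff (by
        exact mul_ne_zero (mul_ne_zero (hwd ℓ j) (htl ℓ))
          (mul_ne_zero hc h1)) (mul_ne_zero (htl ℓ) h1)]
    ring
  rw [Finset.sum_congr rfl (fun ℓ _ => hterm ℓ), Finset.sum_neg_distrib, key]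
  -- now the sign bookkeeping
  have e2 : P.eval (-t) = (-1 : ℂ)^n * ∏ m ∈ Finset.univ.erase j, (t + w m) := by
    rw [hevalP]
    calc ∏ m ∈ Finset.univ.erase j, (-t - w m)
        = ∏ m ∈ Finset.univ.erase j, (-(t + w m)) :=
          Finset.prod_congr rfl fun m _ => by ring
      _ = (-1 : ℂ)^(Finset.univ.erase j).card * ∏ m ∈ Finset.univ.erase j, (t + w m) :=
          prod_neg' _ _
      _ = (-1 : ℂ)^n * ∏ m ∈ Finset.univ.erase j, (t + w m) := by rw [hcardj]
  have e3 : ∏ μ, (-t - u μ) = (-1 : ℂ)^(n+1) * ∏ μ, (t + u μ) := by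
    calc ∏ μ, (-t - u μ) = ∏ μ, (-(t + u μ)) := Finset.prod_congr rfl fun m _ => by ring
      _ = (-1 : ℂ)^(Finset.univ : Finset (Fin (n+1))).card * ∏ μ, (t + u μ) := prod_neg' _ _
      _ = (-1 : ℂ)^(n+1) * ∏ μ, (t + u μ) := by simp
  rw [e2, e3]
  have h4 : ∏ μ, (t + u μ) ≠ 0 := Finset.prod_ne_zero_iff.mpr (fun μ _ => htl μ)
  have h5 : ((-1 : ℂ))^n ≠ 0 := by norm_num
  field_simp
  ring
end

section
/- Let n ≥ 0, let u_1,…,u_{n+1} ∈ ℂ be pairwise distinct, let w_1,…,w_{n+1} ∈ ℂ with u_ℓ ≠ w_m for all ℓ,m, and let a_0,…,a_n ∈ ℂ. For any n-tuple x set Y(x) := Σ_{p=0}^{n} a_p σ_p(x). Then for each j = 1, …, n+1: Σ_{ℓ=1}^{n+1} (∏_{i≠ℓ} g(u_ℓ,u_i)) · Y(û_ℓ) · g(u_ℓ,w_j) / (∏_{m=1}^{n+1} g(u_ℓ,w_m)) = Y(ŵ_j), where û_ℓ is the n-tuple (u_1,…,u_{n+1}) with u_ℓ omitted and ŵ_j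 is the n-tuple (w_1,…,w_{n+1}) with w_j omitted. -/
theorem erase_eq_map_aux (n : ℕ) (ℓ : Fin (n+1)) :
    Finset.univ.erase ℓ = Finset.univ.map ℓ.succAboveEmb := by
  ext k
  simp only [Finset.mem_erase, Finset.mem_univ, and_true, Finset.mem_map,
    Fin.succAboveEmb_apply, true_and]
  constructor
  · intro h; exact Fin.exists_succAbove_eq h
  · rintro ⟨a, rfl⟩; exact Fin.succAbove_ne ℓ a

theorem esym_comp_aux (n : ℕ) (v : Fin (n+1) → ℂ) (ℓ : Fin (n+1)) (p : ℕ) :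
    esym (v ∘ ℓ.succAbove) p = ∑ t ∈ (Finset.univ.erase ℓ).powersetCard p, ∏ i ∈ t, v i := by
  rw [erase_eq_map_aux, Finset.powersetCard_map, Finset.sum_map, esym]
  refine Finset.sum_congr rfl fun s _ => ?_
  rw [RelEmbedding.coe_toEmbedding, Finset.mapEmbedding_apply, Finset.prod_map]
  rfl

theorem card_erase_aux (n : ℕ) (ℓ : Fin (n+1)) : (Finset.univ.erase ℓ).card = n := by
  rw [Finset.card_erase_of_mem (Finset.mem_univ ℓ), Finset.card_univ, Fintype.card_fin]; omega

open Polynomial in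
theorem poly_key_aux (n : ℕ) (u w : Fin (n+1) → ℂ) (hu : Function.Injective u) (j : Fin (n+1)) :
    (∑ ℓ : Fin (n+1), C ((∏ m ∈ Finset.univ.erase j, (u ℓ - w m)) /
        (∏ i ∈ Finset.univ.erase ℓ, (u ℓ - u i))) *
      ∏ i ∈ Finset.univ.erase ℓ, (X + C (u i)))
    = ∏ m ∈ Finset.univ.erase j, (X + C (w m)) := by
  have hcard := card_erase_aux n
  have hprodne : ∀ k : Fin (n+1), (∏ i ∈ Finset.univ.erase k, (u k - u i)) ≠ 0 := by
    intro k
    refine Finset.prod_ne_zero_iff.mpr fun i hi => sub_ne_zero.mpr fun h => ?_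
    exact (Finset.mem_erase.mp hi).1 (hu h).symm
  have hneg : ∀ (x : ℂ) (s : Finset (Fin (n+1))) (f : Fin (n+1) → ℂ),
      ∏ i ∈ s, (-x + f i) = (-1) ^ s.card * ∏ i ∈ s, (x - f i) := by
    intro x s f
    rw [← Finset.prod_const, ← Finset.prod_mul_distrib]
    exact Finset.prod_congr rfl fun i _ => by ring
  have hD : (∑ ℓ : Fin (n+1), C ((∏ m ∈ Finset.univ.erase j, (u ℓ - w m)) /
        (∏ i ∈ Finset.univ.erase ℓ, (u ℓ - u i))) *
      ∏ i ∈ Finset.univ.erase ℓ, (X + C (u i)))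
      - (∏ m ∈ Finset.univ.erase j, (X + C (w m))) = 0 := by
    apply Polynomial.eq_zero_of_natDegree_lt_card_of_eval_eq_zero _
      (f := fun k => -(u k)) (fun a b hab => hu (neg_injective hab))
    · intro k
      rw [eval_sub, eval_finset_sum, eval_prod]
      simp only [eval_mul, eval_C, eval_prod, eval_add, eval_X]
      rw [Finset.sum_eq_single k]
      · rw [hneg, hneg, hcard, hcard, div_mul_eq_mul_div, mul_comm, mul_assoc,
          mul_div_assoc, mul_div_cancel_left₀ _ (hprodne k), sub_self]
      · intro ℓ _ hℓ
        have hz : (∏ x ∈ Finset.univ.erase ℓ, (-u k + u x)) = 0 :=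
          Finset.prod_eq_zero (Finset.mem_erase.mpr ⟨fun h => hℓ h.symm, Finset.mem_univ k⟩)
            (by ring)
        rw [hz, mul_zero]
      · exact fun h => absurd (Finset.mem_univ k) h
    · refine lt_of_le_of_lt (natDegree_sub_le _ _) ?_
      rw [Fintype.card_fin]
      have h1 : ∀ s : Finset (Fin (n+1)), ∀ v : Fin (n+1) → ℂ,
          (∏ i ∈ s, (X + C (v i))).natDegree ≤ s.card := by
        intro s v
        refine le_trans (natDegree_prod_le _ _) ?_
        have h2 := Finset.sum_le_card_nsmul s (fun i => (X + C (v i)).natDegree) 1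
          (fun i _ => le_of_eq (natDegree_X_add_C _))
        simpa using h2
      refine max_lt ?_ ?_
      · refine Nat.lt_succ_of_le (natDegree_sum_le_of_forall_le _ _ fun ℓ _ => ?_)
        exact le_trans (natDegree_C_mul_le _ _) (le_trans (h1 _ u) (le_of_eq (hcard ℓ)))
      · exact Nat.lt_succ_of_le (le_trans (h1 _ w) (le_of_eq (hcard j)))
  exact sub_eq_zero.mp hD

open Polynomial in
theorem sum_esym_aux (n : ℕ) (u w : Fin (n+1) → ℂ) (hu : Function.Injective u)
    (j : Fin (n+1)) (p : ℕ) (hp : p ≤ n) :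
    ∑ ℓ : Fin (n+1), ((∏ m ∈ Finset.univ.erase j, (u ℓ - w m)) /
        (∏ i ∈ Finset.univ.erase ℓ, (u ℓ - u i))) * esym (u ∘ ℓ.succAbove) p
      = esym (w ∘ j.succAbove) p := by
  have hC : ∀ (ℓ : Fin (n+1)) (v : Fin (n+1) → ℂ),
      (∏ i ∈ Finset.univ.erase ℓ, (X + C (v i))).coeff (n - p) = esym (v ∘ ℓ.succAbove) p := by
    intro ℓ v
    rw [Finset.prod_X_add_C_coeff _ _ (by rw [card_erase_aux]; omega), esym_comp_aux,
      card_erase_aux, Nat.sub_sub_self hp]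
  calc ∑ ℓ : Fin (n+1), ((∏ m ∈ Finset.univ.erase j, (u ℓ - w m)) /
        (∏ i ∈ Finset.univ.erase ℓ, (u ℓ - u i))) * esym (u ∘ ℓ.succAbove) p
      = ∑ ℓ : Fin (n+1), (C ((∏ m ∈ Finset.univ.erase j, (u ℓ - w m)) /
          (∏ i ∈ Finset.univ.erase ℓ, (u ℓ - u i))) *
          ∏ i ∈ Finset.univ.erase ℓ, (X + C (u i))).coeff (n - p) :=
        Finset.sum_congr rfl fun ℓ _ => by rw [Polynomial.coeff_C_mul, hC ℓ u]
    _ = (∑ ℓ : Fin (n+1), C ((∏ m ∈ Finset.univ.erase j, (u ℓ - w m)) /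
          (∏ i ∈ Finset.univ.erase ℓ, (u ℓ - u i))) *
          ∏ i ∈ Finset.univ.erase ℓ, (X + C (u i))).coeff (n - p) :=
        (Polynomial.finset_sum_coeff _ _ _).symm
    _ = (∏ m ∈ Finset.univ.erase j, (X + C (w m))).coeff (n - p) := by
        rw [poly_key_aux n u w hu j]
    _ = esym (w ∘ j.succAbove) p := hC j w

/-- the summation identity
`∑_ℓ (∏_{i≠ℓ} g(u_ℓ,u_i)) Y(û_ℓ) g(u_ℓ,w_j) / (∏_m g(u_ℓ,w_m)) = Y(ŵ_j)`. -/
theorem sum_identity_Y (c : ℂ) (hc : c ≠ 0) (n : ℕ)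
    (u : Fin (n + 1) → ℂ) (hu : Function.Injective u)
    (w : Fin (n + 1) → ℂ) (huw : ∀ ℓ m : Fin (n + 1), u ℓ ≠ w m)
    (a : Fin (n + 1) → ℂ) (j : Fin (n + 1)) :
    ∑ ℓ : Fin (n + 1),
        (∏ i ∈ Finset.univ.erase ℓ, g c (u ℓ) (u i)) * Y a (u ∘ ℓ.succAbove) *
          g c (u ℓ) (w j) / (∏ m, g c (u ℓ) (w m))
      = Y a (w ∘ j.succAbove) := by
  have hterm : ∀ ℓ : Fin (n+1),
      (∏ i ∈ Finset.univ.erase ℓ, g c (u ℓ) (u i)) * Y a (u ∘ ℓ.succAbove) *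
          g c (u ℓ) (w j) / (∏ m, g c (u ℓ) (w m))
      = ((∏ m ∈ Finset.univ.erase j, (u ℓ - w m)) /
          (∏ i ∈ Finset.univ.erase ℓ, (u ℓ - u i))) * Y a (u ∘ ℓ.succAbove) := by
    intro ℓ
    have hPu : (∏ i ∈ Finset.univ.erase ℓ, (u ℓ - u i)) ≠ 0 := by
      refine Finset.prod_ne_zero_iff.mpr fun i hi => sub_ne_zero.mpr fun h => ?_
      exact (Finset.mem_erase.mp hi).1 (hu h).symm
    have hPwj : (∏ m ∈ Finset.univ.erase j, (u ℓ - w m)) ≠ 0 :=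
      Finset.prod_ne_zero_iff.mpr fun m _ => sub_ne_zero.mpr (huw ℓ m)
    have hwj : u ℓ - w j ≠ 0 := sub_ne_zero.mpr (huw ℓ j)
    have hsplit : (∏ m, (u ℓ - w m)) = (u ℓ - w j) * ∏ m ∈ Finset.univ.erase j, (u ℓ - w m) :=
      (Finset.mul_prod_erase _ _ (Finset.mem_univ j)).symm
    simp only [g, Finset.prod_div_distrib, Finset.prod_const, card_erase_aux,
      Finset.card_univ, Fintype.card_fin, hsplit]
    field_simp
    ring
  calc ∑ ℓ : Fin (n + 1),
        (∏ i ∈ Finset.univ.erase ℓ, g c (u ℓ) (u i)) * Y a (u ∘ ℓ.succAbove) *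
          g c (u ℓ) (w j) / (∏ m, g c (u ℓ) (w m))
      = ∑ ℓ : Fin (n+1), ((∏ m ∈ Finset.univ.erase j, (u ℓ - w m)) /
          (∏ i ∈ Finset.univ.erase ℓ, (u ℓ - u i))) * Y a (u ∘ ℓ.succAbove) :=
        Finset.sum_congr rfl fun ℓ _ => hterm ℓ
    _ = ∑ ℓ : Fin (n+1), ∑ p : Fin (n+1), a p * (((∏ m ∈ Finset.univ.erase j, (u ℓ - w m)) /
          (∏ i ∈ Finset.univ.erase ℓ, (u ℓ - u i))) * esym (u ∘ ℓ.succAbove) (p : ℕ)) := by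
        refine Finset.sum_congr rfl fun ℓ _ => ?_
        rw [Y, Finset.mul_sum]
        exact Finset.sum_congr rfl fun p _ => by ring
    _ = ∑ p : Fin (n+1), ∑ ℓ : Fin (n+1), a p * (((∏ m ∈ Finset.univ.erase j, (u ℓ - w m)) /
          (∏ i ∈ Finset.univ.erase ℓ, (u ℓ - u i))) * esym (u ∘ ℓ.succAbove) (p : ℕ)) :=
        Finset.sum_comm
    _ = ∑ p : Fin (n+1), a p * esym (w ∘ j.succAbove) (p : ℕ) := by
        refine Finset.sum_congr rfl fun p _ => ?_
        rw [← Finset.mul_sum, sum_esym_aux n u w hu j (p : ℕ) (Fin.is_le p)]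
    _ = Y a (w ∘ j.succAbove) := rfl
end

section
/- Let n ≥ 1, let v = (v_1,…,v_n) ∈ ℂ^n have pairwise distinct entries, let α_0,…,α_n : ℂ → ℂ be polynomial functions, and set Y(z, x) := Σ_{p=0}^{n} α_p(z) σ_p(x) for z ∈ ℂ and n-tuples x. Fix k and assume the Bethe equation Y(v_k, v) = 0 holds. Then: (a) for every j ≠ k, g(v_k,v_j) · Y(v_k, v^{(j→v_k)}) = c · Σ_{p=0}^{n} α_p(v_k) σ_{p−1}(v̂_j); and (b) lim_{u→v_k} g(u,v_k) · Y(u, v^{(k→u)}) = c · ( Σ_{p=0}^{n} α_p′(v_k) σ_p(v) + Σ_{p=0}^{n} α_p(v_k) σ_{p−1}(v̂_k) ). Here v^{(j→t)} is the n-tuple obtained from v by replacing v_j with t, and v̂_j is the (n−1)-tuple v with v_j omitted. In particular, under the Bethe equations the entries of the matrix Ω_{jk} = g(u_k,v_j) Y(u_k, v^{(j→u_k)}) tend, as u_k → v_k, to c times the corresponding Gaudin-matrix entries. -/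
/-- `esymZ w p` extends `esym` to integer indices, vanishing for `p < 0`. -/
noncomputable def esymZ {m : ℕ} (w : Fin m → ℂ) (p : ℤ) : ℂ :=
  if 0 ≤ p then esym w p.toNat else 0

lemma esym_update_eq {m : ℕ} (v : Fin (m + 1) → ℂ) (j : Fin (m + 1)) (t : ℂ) (p : ℕ) :
    esym (Function.update v j t) p
      = esym (v ∘ j.succAbove) p + t * esymZ (v ∘ j.succAbove) ((p : ℤ) - 1) := by
  have hmap : ∀ q : ℕ, ∑ s ∈ Finset.powersetCard q (Finset.univ.map j.succAboveEmb),
      ∏ i ∈ s, v i = ∑ s ∈ Finset.powersetCard q Finset.univ, ∏ i ∈ s, (v ∘ j.succAbove) i := by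
    intro q
    rw [Finset.powersetCard_map, Finset.sum_map]
    refine Finset.sum_congr rfl fun s _ => ?_
    show ∏ i ∈ s.map j.succAboveEmb, v i = _
    rw [Finset.prod_map]
    rfl
  have hju : j ∉ (Finset.univ.map j.succAboveEmb) := by
    simp only [Finset.mem_map, Finset.mem_univ, true_and, Fin.succAboveEmb_apply]
    rintro ⟨i, hi⟩
    exact Fin.succAbove_ne j i hi
  cases p with
  | zero => simp [esym, esymZ]
  | succ q =>
    have h1 : ((q + 1 : ℕ) : ℤ) - 1 = (q : ℤ) := by push_cast; ring
    rw [h1]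
    simp only [esymZ, Int.toNat_natCast, if_pos (Int.natCast_nonneg q)]
    unfold esym
    rw [Fin.univ_succAbove m j, Finset.cons_eq_insert,
      Finset.powersetCard_succ_insert hju]
    have hdisj : Disjoint (Finset.powersetCard (q + 1) (Finset.univ.map j.succAboveEmb))
        ((Finset.powersetCard q (Finset.univ.map j.succAboveEmb)).image (insert j)) := by
      rw [Finset.disjoint_right]
      rintro s hs hs'
      obtain ⟨u, hu, rfl⟩ := Finset.mem_image.mp hs
      have hsub := (Finset.mem_powersetCard.mp hs').1
      exact hju (hsub (Finset.mem_insert_self j u))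
    rw [Finset.sum_union hdisj]
    congr 1
    · refine (Finset.sum_congr rfl fun s hs => ?_).trans (hmap (q + 1))
      refine Finset.prod_congr rfl fun i hi => ?_
      have : i ≠ j := fun h => hju (h ▸ (Finset.mem_powersetCard.mp hs).1 hi)
      exact Function.update_of_ne this t v
    · rw [Finset.sum_image]
      · rw [← hmap q, Finset.mul_sum]
        refine Finset.sum_congr rfl fun s hs => ?_
        have hjs : j ∉ s := fun h => hju ((Finset.mem_powersetCard.mp hs).1 h)
        rw [Finset.prod_insert hjs, Function.update_self]
        congr 1
        refine Finset.prod_congr rfl fun i hi => ?_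
        have : i ≠ j := fun h => hjs (h ▸ hi)
        exact Function.update_of_ne this t v
      · intro s hs u hu h
        have hjs : j ∉ s := fun h' => hju ((Finset.mem_powersetCard.mp hs).1 h')
        have hju' : j ∉ u := fun h' => hju ((Finset.mem_powersetCard.mp hu).1 h')
        have := congrArg (Finset.erase · j) h
        simpa [Finset.erase_insert hjs, Finset.erase_insert hju'] using this

lemma esym_eq_aux {m : ℕ} (v : Fin (m + 1) → ℂ) (j : Fin (m + 1)) (p : ℕ) :
    esym v p = esym (v ∘ j.succAbove) p + v j * esymZ (v ∘ j.succAbove) ((p : ℤ) - 1) := by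
  conv_lhs => rw [← Function.update_eq_self j v]
  exact esym_update_eq v j (v j) p

/-- behaviour of the entries `Ω_{jk} = g(u_k,v_j) Y(u_k, v^{(j→u_k)})` as
`u_k → v_k`, under the Bethe equation `Y(v_k, v) = 0`.  Here the number of Bethe
parameters is `n = m + 1 ≥ 1`, `Y(z, x) = ∑_{p=0}^{n} α_p(z) σ_p(x)`:
(a) the off-diagonal entries evaluated at `u_k = v_k`, and (b) the diagonal limit. -/
theorem Omega_entries_Gaudin_limit (c : ℂ) (hc : c ≠ 0) (m : ℕ)
    (v : Fin (m + 1) → ℂ) (hv : Function.Injective v)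
    (α : Fin (m + 2) → ℂ → ℂ)
    (hα : ∀ p : Fin (m + 2), ∃ q : Polynomial ℂ, α p = fun z => q.eval z)
    (k : Fin (m + 1))
    (hBethe : ∑ p : Fin (m + 2), α p (v k) * esym v (p : ℕ) = 0) :
    (∀ j : Fin (m + 1), j ≠ k →
      g c (v k) (v j) *
          (∑ p : Fin (m + 2), α p (v k) * esym (Function.update v j (v k)) (p : ℕ))
        = c * ∑ p : Fin (m + 2), α p (v k) * esymZ (v ∘ j.succAbove) ((p : ℤ) - 1)) ∧
    Filter.Tendsto
      (fun u : ℂ => g c u (v k) *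
        (∑ p : Fin (m + 2), α p u * esym (Function.update v k u) (p : ℕ)))
      (nhdsWithin (v k) {v k}ᶜ)
      (nhds (c * ((∑ p : Fin (m + 2), deriv (α p) (v k) * esym v (p : ℕ)) +
        ∑ p : Fin (m + 2), α p (v k) * esymZ (v ∘ k.succAbove) ((p : ℤ) - 1)))) := by
  have hdiff : ∀ p, Differentiable ℂ (α p) := by
    intro p
    obtain ⟨qp, hqp⟩ := hα p
    rw [hqp]
    exact qp.differentiable
  constructor
  · intro j hjk
    have hvkj : v k - v j ≠ 0 := sub_ne_zero.mpr fun h => hjk (hv h).symm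
    have hsum : ∑ p : Fin (m + 2), α p (v k) * esym (Function.update v j (v k)) (p : ℕ)
        = (v k - v j) * ∑ p : Fin (m + 2), α p (v k) * esymZ (v ∘ j.succAbove) ((p : ℤ) - 1) := by
      have : ∀ p : Fin (m + 2), α p (v k) * esym (Function.update v j (v k)) (p : ℕ)
          = α p (v k) * esym v (p : ℕ)
            + (v k - v j) * (α p (v k) * esymZ (v ∘ j.succAbove) ((p : ℤ) - 1)) := by
        intro p
        rw [esym_update_eq, esym_eq_aux v j]
        ring
      rw [Finset.sum_congr rfl fun p _ => this p, Finset.sum_add_distrib, hBethe,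
        ← Finset.mul_sum, zero_add]
    rw [hsum, g]
    field_simp
  · set E : Fin (m + 2) → ℂ := fun p => esym (v ∘ k.succAbove) (p : ℕ) with hE
    set EZ : Fin (m + 2) → ℂ := fun p => esymZ (v ∘ k.succAbove) ((p : ℤ) - 1) with hEZ
    set F : ℂ → ℂ := fun u => ∑ p : Fin (m + 2), α p u * (E p + u * EZ p) with hFdef
    have hF0 : F (v k) = 0 := by
      rw [hFdef]
      simp only
      rw [← hBethe]
      exact Finset.sum_congr rfl fun p _ => by rw [esym_eq_aux v k]
    have hF' : HasDerivAt F
        ((∑ p : Fin (m + 2), deriv (α p) (v k) * esym v (p : ℕ)) +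
          ∑ p : Fin (m + 2), α p (v k) * EZ p) (v k) := by
      have h1 : HasDerivAt F
          (∑ p : Fin (m + 2), (deriv (α p) (v k) * (E p + v k * EZ p) + α p (v k) * EZ p))
          (v k) := by
        apply HasDerivAt.fun_sum
        intro p _
        have ha : HasDerivAt (α p) (deriv (α p) (v k)) (v k) :=
          (hdiff p (v k)).hasDerivAt
        have hb : HasDerivAt (fun u : ℂ => E p + u * EZ p) (EZ p) (v k) := by
          simpa using ((hasDerivAt_id (v k)).mul_const (EZ p)).const_add (E p)
        exact ha.mul hb
      have : (∑ p : Fin (m + 2), (deriv (α p) (v k) * (E p + v k * EZ p) + α p (v k) * EZ p))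
          = (∑ p : Fin (m + 2), deriv (α p) (v k) * esym v (p : ℕ)) +
            ∑ p : Fin (m + 2), α p (v k) * EZ p := by
        rw [Finset.sum_add_distrib]
        congr 1
        exact Finset.sum_congr rfl fun p _ => by rw [esym_eq_aux v k]
      rwa [this] at h1
    have hslope := hasDerivAt_iff_tendsto_slope.mp hF'
    have htend := hslope.const_mul c
    refine htend.congr' ?_
    filter_upwards [self_mem_nhdsWithin] with u hu
    have huk : u - v k ≠ 0 := sub_ne_zero.mpr hu
    rw [slope_def_field, hF0, sub_zero, g]
    have : (∑ p : Fin (m + 2), α p u * esym (Function.update v k u) (p : ℕ)) = F u := by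
      exact Finset.sum_congr rfl fun p _ => by rw [esym_update_eq]
    rw [this]
    field_simp
end
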